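/- arXiv:1806.04837 — 3 statements merged into one kernel-verified Lean document; each statement's English description precedes it below -/
import Mathlib

section
/- In the formal power series ring Ĥ¹[[X]] one has φ(X) = log_{*_q}(1/(1 − e_{1̄}X)), where φ(X) = (log(1 + aX))·b = Σ_{n≥1} ((−1)^{n−1}/n) a^n b X^n and 1/(1 − e_{1̄}X) = Σ_{n≥0} e_{1̄}^n X^n. (Note a^n b = e_{n̄} := Σ_{j=2}^n (−ℏ)^{n−j} e_j + (−ℏ)^{n−1} e_{1̄} ∈ Ĥ¹.) -/
noncomputable section

/-- The coefficient ring `𝒞 = ℚ[ℏ, ℏ⁻¹]`, realized as Laurent polynomials over `ℚ`. -/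
abbrev CC : Type := LaurentPolynomial ℚ

/-- The variable `ℏ ∈ 𝒞`. -/
def hb : CC := LaurentPolynomial.T 1

/-- Embedding of rational constants into `𝒞`. -/
def qs (x : ℚ) : CC := algebraMap ℚ CC x

/-- The non-commutative polynomial ring `H = 𝒞⟨a, b⟩`. -/
abbrev H : Type := FreeAlgebra CC (Fin 2)

/-- The generator `a`. -/
def av : H := FreeAlgebra.ι CC 0

/-- The generator `b`. -/
def bv : H := FreeAlgebra.ι CC 1

/-- `e k` for `k : ℕ`:  `e 0 = e_{1̄} = ab`, and `e (k+1) = e_{k+1} = a^k (a+ℏ) b`. -/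
def ev : ℕ → H
  | 0 => av * bv
  | (k+1) => av ^ k * (av + algebraMap CC H hb) * bv

/-- The monomial `e_{k_1} ⋯ e_{k_r}` attached to an index (a list over `N̂`,
with `0` encoding `1̄` and `k+1` encoding the positive integer `k+1`). -/
def eword (l : List ℕ) : H := (l.map ev).prod

/-- `Ĥ¹`, as the `𝒞`-span of all monomials `e_k` (this coincides with the subalgebra
freely generated by the `e_k`). -/
def H1 : Submodule CC H := Submodule.span CC {x : H | ∃ l : List ℕ, x = eword l}

/-- `Ĥ⁰`, the `𝒞`-span of monomials `e_k` with `k ∈ Î₀` (first entry `≠ 1`). -/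
def H0 : Submodule CC H := Submodule.span CC
  {x : H | ∃ l : List ℕ, l.head? ≠ some 1 ∧ x = eword l}

/-- The circle product `∘_q` on the generators. -/
def circ : ℕ → ℕ → H
  | 0, 0 => ev 2 - hb • ev 0
  | 0, (l+1) => ev (l+2)
  | (k+1), 0 => ev (k+2)
  | (k+1), (l+1) => ev (k+l+2) + hb • ev (k+l+1)

/-- The defining properties of the shuffle product `⧢_q` on `H`. -/
def IsShuffle (sh : H →ₗ[CC] H →ₗ[CC] H) : Prop :=
  (∀ w : H, sh 1 w = w) ∧ (∀ w : H, sh w 1 = w) ∧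
  (∀ w w' : H, sh (av * w) (av * w') =
      av * (sh (av * w) w' + sh w (av * w') + hb • sh w w')) ∧
  (∀ w w' : H, sh (bv * w) w' = bv * sh w w') ∧
  (∀ w w' : H, sh w (bv * w') = bv * sh w w')

/-- The defining properties of the stuffle product `*_q` on `Ĥ¹`. -/
def IsStuffle (st : H →ₗ[CC] H →ₗ[CC] H) : Prop :=
  (∀ w : H, st 1 w = w) ∧ (∀ w : H, st w 1 = w) ∧
  (∀ k l : ℕ, ∀ w w' : H, w ∈ H1 → w' ∈ H1 →
    st (ev k * w) (ev l * w') =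
      ev k * st w (ev l * w') + ev l * st (ev k * w) w' + circ k l * st w w')

/-- The q-integer `[m] = (1-q^m)/(1-q)`. -/
def qint (q : ℂ) (m : ℕ) : ℂ := (1 - q ^ m) / (1 - q)

/-- `F_k(m)`:  `F 0 = F_{1̄}` and `F (k+1) = F_{k+1}`. -/
def Fq (q : ℂ) : ℕ → ℕ → ℂ
  | 0, m => q ^ m / qint q m
  | (k+1), m => q ^ (k * m) / (qint q m) ^ (k + 1)

/-- `ζ_q(k)` for an index `k` (a list over `N̂`): the sum over `m_1 > ⋯ > m_r ≥ 1`. -/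
def zetaq (q : ℂ) (l : List ℕ) : ℂ :=
  ∑' m : {f : Fin l.length → ℕ // StrictAnti f ∧ ∀ i, 0 < f i},
    ∏ i : Fin l.length, Fq q (l.get i) (m.1 i)

/-- The defining properties of the `𝒞`-linear map `Z_q` (as a map on all of `H`
extending the one on `Ĥ⁰`): additive, `𝒞`-semilinear along `ρ`, sending `e_k ↦ ζ_q(k)`
for `k ∈ Î₀`. -/
def IsZq (ρ : CC →ₐ[ℚ] ℂ) (q : ℂ) (Z : H →+ ℂ) : Prop :=
  (∀ c : CC, ∀ w : H, Z (c • w) = ρ c * Z w) ∧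
  (∀ l : List ℕ, l.head? ≠ some 1 → Z (eword l) = zetaq q l)


/-- The `𝒞[[X]]`-bilinear extension to `H[[X]]` of a `𝒞`-bilinear product `m` on `H`. -/
def extMul (m : H →ₗ[CC] H →ₗ[CC] H) (f g : PowerSeries H) : PowerSeries H :=
  PowerSeries.mk fun N =>
    ∑ p ∈ Finset.HasAntidiagonal.antidiagonal N, m (PowerSeries.coeff (R := H) p.1 f) (PowerSeries.coeff (R := H) p.2 g)

/-- `n`-fold power with respect to the product `extMul m`, with `f^1 = f`. -/
def itpow (m : H →ₗ[CC] H →ₗ[CC] H) (f : PowerSeries H) : ℕ → PowerSeries H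
  | 0 => 1
  | 1 => f
  | (n+2) => extMul m f (itpow m f (n+1))

/-- `log_m (1 + f) = Σ_{n≥1} ((−1)^{n−1}/n) f^{m n}`, defined coefficientwise (for
`f ∈ X·H[[X]]` the sum over `n` contributing to the `N`-th coefficient is finite,
namely `1 ≤ n ≤ N`). -/
def serlog (m : H →ₗ[CC] H →ₗ[CC] H) (f : PowerSeries H) : PowerSeries H :=
  PowerSeries.mk fun N =>
    ∑ n ∈ Finset.Icc 1 N, qs ((-1 : ℚ) ^ (n - 1) / (n : ℚ)) • PowerSeries.coeff (R := H) N (itpow m f n)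

/-- The geometric series `1/(1 − e_{1̄}X) = Σ_{n≥0} e_{1̄}^n X^n`. -/
def geom : PowerSeries H := PowerSeries.mk fun n => (av * bv) ^ n

/-- The series `e_{1̄} X`. -/
def e1X : PowerSeries H := PowerSeries.mk fun n => if n = 1 then av * bv else 0

/-- `ψ(X) = (1/ℏ)·a·log(1 + ℏbX) = Σ_{n≥1} ((−1)^{n−1}/n) ℏ^{n−1} a b^n X^n`. -/
def psiS : PowerSeries H := PowerSeries.mk fun n =>
  if n = 0 then 0 else (qs ((-1 : ℚ) ^ (n - 1) / (n : ℚ)) * hb ^ (n - 1)) • (av * bv ^ n)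

/-- `φ(X) = (log(1 + aX))·b = Σ_{n≥1} ((−1)^{n−1}/n) a^n b X^n`. -/
def phiS : PowerSeries H := PowerSeries.mk fun n =>
  if n = 0 then 0 else qs ((-1 : ℚ) ^ (n - 1) / (n : ℚ)) • (av ^ n * bv)

/-- `log(1 + ℏbX) = Σ_{n≥1} ((−1)^{n−1}/n) ℏ^n b^n X^n`. -/
def lgS : PowerSeries H := PowerSeries.mk fun n =>
  if n = 0 then 0 else (qs ((-1 : ℚ) ^ (n - 1) / (n : ℚ)) * hb ^ n) • (bv ^ n)


/-- Free module on lists: the abstract harmonic (quasi-shuffle) algebra. -/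
def QSA : Type := List ℕ →₀ CC

instance : AddCommGroup QSA := inferInstanceAs (AddCommGroup (List ℕ →₀ CC))
instance : Module CC QSA := inferInstanceAs (Module CC (List ℕ →₀ CC))
instance : Module ℚ QSA := inferInstanceAs (Module ℚ (List ℕ →₀ CC))
instance : IsScalarTower ℚ CC QSA := inferInstanceAs (IsScalarTower ℚ CC (List ℕ →₀ CC))

def bA (l : List ℕ) : QSA := Finsupp.single l 1

lemma single_eq_smul_bA (l : List ℕ) (c : CC) :
    (Finsupp.single l c : QSA) = c • bA l := by
  exact (by simp : (Finsupp.single l c : List ℕ →₀ CC) = c • (Finsupp.single l 1 : List ℕ →₀ CC))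

lemma QSA.induction_lin {p : QSA → Prop} (x : QSA) (h0 : p 0)
    (hadd : ∀ f g : QSA, p f → p g → p (f + g))
    (hs : ∀ (l : List ℕ) (c : CC), p (c • bA l)) : p x := by
  induction x using Finsupp.induction_linear with
  | zero => exact h0
  | add f g hf hg => exact hadd f g hf hg
  | single l c =>
      have := hs l c
      rwa [← single_eq_smul_bA] at this

def consA (k : ℕ) : QSA →ₗ[CC] QSA := Finsupp.lmapDomain CC CC (List.cons k)

@[simp] lemma consA_bA (k : ℕ) (l : List ℕ) : consA k (bA l) = bA (k :: l) := by
  exact (by simp : Finsupp.mapDomain (List.cons k) (Finsupp.single l (1:CC)) = Finsupp.single (k :: l) (1:CC))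

def HSA : List ℕ → List ℕ → QSA
  | [], l' => bA l'
  | l, [] => bA l
  | (k :: l), (k' :: l') =>
      consA k (HSA l (k' :: l')) + consA k' (HSA (k :: l) l')
        + consA (k + k' + 1) (HSA l l')
termination_by l l' => l.length + l'.length

@[simp] lemma HSA_nil_left (l' : List ℕ) : HSA [] l' = bA l' := by
  cases l' <;> simp [HSA]

@[simp] lemma HSA_nil_right (l : List ℕ) : HSA l [] = bA l := by
  cases l <;> simp [HSA]

lemma HSA_cons_cons (k k' : ℕ) (l l' : List ℕ) :
    HSA (k :: l) (k' :: l') =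
      consA k (HSA l (k' :: l')) + consA k' (HSA (k :: l) l')
        + consA (k + k' + 1) (HSA l l') := by
  rw [HSA]

lemma HSA_comm (l l' : List ℕ) : HSA l l' = HSA l' l := by
  match l, l' with
  | [], l' => simp
  | l, [] => simp
  | (k :: l), (k' :: l') =>
      rw [HSA_cons_cons, HSA_cons_cons k' k]
      rw [HSA_comm l (k' :: l'), HSA_comm (k :: l) l', HSA_comm l l']
      have : k + k' + 1 = k' + k + 1 := by omega
      rw [this]
      abel
termination_by l.length + l'.length

def innerM (l : List ℕ) : QSA →ₗ[CC] QSA :=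
  Finsupp.lsum CC fun l' => LinearMap.toSpanSingleton CC QSA (HSA l l')

def mulA : QSA →ₗ[CC] QSA →ₗ[CC] QSA :=
  Finsupp.lsum CC fun l => LinearMap.toSpanSingleton CC (QSA →ₗ[CC] QSA) (innerM l)

lemma innerM_bA (l l' : List ℕ) : innerM l (bA l') = HSA l l' := by
  have : innerM l (bA l') = (Finsupp.lsum CC fun l' => LinearMap.toSpanSingleton CC QSA (HSA l l'))
      (Finsupp.single l' (1:CC)) := rfl
  rw [this, Finsupp.lsum_single, LinearMap.toSpanSingleton_apply_one]

lemma mulA_bA (l : List ℕ) : mulA (bA l) = innerM l := by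
  have : mulA (bA l) = (Finsupp.lsum CC fun l => LinearMap.toSpanSingleton CC (QSA →ₗ[CC] QSA) (innerM l))
      (Finsupp.single l (1:CC)) := rfl
  rw [this, Finsupp.lsum_single, LinearMap.toSpanSingleton_apply_one]

@[simp] lemma mulA_bA_bA (l l' : List ℕ) : mulA (bA l) (bA l') = HSA l l' := by
  rw [mulA_bA, innerM_bA]

/-- extensionality for bilinear maps out of QSA -/
lemma bilin_ext {f g : QSA →ₗ[CC] QSA →ₗ[CC] QSA}
    (h : ∀ l l', f (bA l) (bA l') = g (bA l) (bA l')) : f = g := by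
  refine Finsupp.lhom_ext' fun l => LinearMap.ext_ring ?_
  refine Finsupp.lhom_ext' fun l' => LinearMap.ext_ring ?_
  exact h l l'

lemma mulA_comm (x y : QSA) : mulA x y = mulA y x := by
  have : mulA = mulA.flip := by
    refine bilin_ext fun l l' => ?_
    simp [HSA_comm l l']
  conv_lhs => rw [this]
  rfl

lemma lin_ext {N : Type*} [AddCommMonoid N] [Module CC N] {f g : QSA →ₗ[CC] N}
    (h : ∀ l, f (bA l) = g (bA l)) : f = g := by
  refine Finsupp.lhom_ext' fun l => LinearMap.ext_ring ?_
  exact h l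

lemma one_mulA (x : QSA) : mulA (bA []) x = x := by
  have : mulA (bA []) = LinearMap.id := lin_ext fun l => by simp
  rw [this]; rfl

lemma mulA_one (x : QSA) : mulA x (bA []) = x := by rw [mulA_comm, one_mulA]

lemma consMul (a : ℕ) (x : QSA) (c : ℕ) (n : List ℕ) :
    mulA (consA a x) (bA (c :: n)) =
      consA a (mulA x (bA (c :: n))) + consA c (mulA (consA a x) (bA n))
        + consA (a + c + 1) (mulA x (bA n)) := by
  induction x using QSA.induction_lin with
  | h0 => simp only [map_zero, LinearMap.zero_apply, add_zero, zero_add]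
  | hadd f g hf hg => simp only [map_add, LinearMap.add_apply, hf, hg]; abel
  | hs l d =>
      simp only [map_smul, LinearMap.smul_apply, consA_bA, mulA_bA_bA]
      rw [HSA_cons_cons]
      simp only [smul_add]

lemma mulCons (a : ℕ) (p : List ℕ) (c : ℕ) (y : QSA) :
    mulA (bA (a :: p)) (consA c y) =
      consA a (mulA (bA p) (consA c y)) + consA c (mulA (bA (a :: p)) y)
        + consA (a + c + 1) (mulA (bA p) y) := by
  induction y using QSA.induction_lin with
  | h0 => simp only [map_zero, add_zero, zero_add]
  | hadd f g hf hg => simp only [map_add, hf, hg]; abel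
  | hs l d =>
      simp only [map_smul, consA_bA, mulA_bA_bA]
      rw [HSA_cons_cons]
      simp only [smul_add]

lemma assoc_basis (l m n : List ℕ) :
    mulA (HSA l m) (bA n) = mulA (bA l) (HSA m n) := by
  match l, m, n with
  | [], m, n => simp [one_mulA]
  | l, [], n => simp
  | l, m, [] => simp [mulA_one]
  | (a :: p), (b :: q), (c :: r) =>
      rw [HSA_cons_cons a b, HSA_cons_cons b c]
      simp only [map_add, LinearMap.add_apply]
      rw [consMul a _ c r, consMul b _ c r, consMul (a+b+1) _ c r]
      rw [mulCons a p b _, mulCons a p c _, mulCons a p (b+c+1) _]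
      have hL : consA c (mulA (consA a (HSA p (b :: q))) (bA r))
          + consA c (mulA (consA b (HSA (a :: p) q)) (bA r))
          + consA c (mulA (consA (a+b+1) (HSA p q)) (bA r))
          = consA c (mulA (HSA (a :: p) (b :: q)) (bA r)) := by
        rw [HSA_cons_cons a b]
        simp only [map_add, LinearMap.add_apply]
      have hR : consA a (mulA (bA p) (consA b (HSA q (c :: r))))
          + consA a (mulA (bA p) (consA c (HSA (b :: q) r)))
          + consA a (mulA (bA p) (consA (b+c+1) (HSA q r)))
          = consA a (mulA (bA p) (HSA (b :: q) (c :: r))) := by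
        rw [HSA_cons_cons b c]
        simp only [map_add]
      have i1 := assoc_basis p (b :: q) (c :: r)
      have i2 := assoc_basis (a :: p) (b :: q) r
      have i3 := assoc_basis p (b :: q) r
      have i4 := assoc_basis (a :: p) q (c :: r)
      have i5 := assoc_basis (a :: p) q r
      have i6 := assoc_basis p q (c :: r)
      have i7 := assoc_basis p q r
      have hnat : a + b + 1 + c + 1 = a + (b + c + 1) + 1 := by omega
      calc consA a (mulA (HSA p (b :: q)) (bA (c :: r)))
            + consA c (mulA (consA a (HSA p (b :: q))) (bA r))
            + consA (a + c + 1) (mulA (HSA p (b :: q)) (bA r))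
            + (consA b (mulA (HSA (a :: p) q) (bA (c :: r)))
            + consA c (mulA (consA b (HSA (a :: p) q)) (bA r))
            + consA (b + c + 1) (mulA (HSA (a :: p) q) (bA r)))
            + (consA (a+b+1) (mulA (HSA p q) (bA (c :: r)))
            + consA c (mulA (consA (a+b+1) (HSA p q)) (bA r))
            + consA (a + b + 1 + c + 1) (mulA (HSA p q) (bA r)))
          = consA a (mulA (HSA p (b :: q)) (bA (c :: r)))
            + consA (a + c + 1) (mulA (HSA p (b :: q)) (bA r))
            + consA b (mulA (HSA (a :: p) q) (bA (c :: r)))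
            + consA (b + c + 1) (mulA (HSA (a :: p) q) (bA r))
            + consA (a+b+1) (mulA (HSA p q) (bA (c :: r)))
            + consA (a + b + 1 + c + 1) (mulA (HSA p q) (bA r))
            + consA c (mulA (HSA (a :: p) (b :: q)) (bA r)) := by
            rw [← hL]; abel
        _ = consA a (mulA (bA p) (HSA (b :: q) (c :: r)))
            + consA (a + c + 1) (mulA (bA p) (HSA (b :: q) r))
            + consA b (mulA (bA (a :: p)) (HSA q (c :: r)))
            + consA (b + c + 1) (mulA (bA (a :: p)) (HSA q r))
            + consA (a+b+1) (mulA (bA p) (HSA q (c :: r)))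
            + consA (a + (b + c + 1) + 1) (mulA (bA p) (HSA q r))
            + consA c (mulA (bA (a :: p)) (HSA (b :: q) r)) := by
            rw [i1, i2, i3, i4, i5, i6, i7, hnat]
        _ = consA a (mulA (bA p) (consA b (HSA q (c :: r))))
            + consA a (mulA (bA p) (consA c (HSA (b :: q) r)))
            + consA a (mulA (bA p) (consA (b+c+1) (HSA q r)))
            + (consA b (mulA (bA (a :: p)) (HSA q (c :: r)))
            + consA (a+b+1) (mulA (bA p) (HSA q (c :: r))))
            + (consA c (mulA (bA (a :: p)) (HSA (b :: q) r))
            + consA (a + c + 1) (mulA (bA p) (HSA (b :: q) r)))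
            + (consA (b + c + 1) (mulA (bA (a :: p)) (HSA q r))
            + consA (a + (b + c + 1) + 1) (mulA (bA p) (HSA q r))) := by
            rw [hR]; abel
        _ = _ := by abel
termination_by l.length + m.length + n.length

lemma mulA_assoc (x y z : QSA) : mulA (mulA x y) z = mulA x (mulA y z) := by
  induction x using QSA.induction_lin with
  | h0 => simp only [map_zero, LinearMap.zero_apply]
  | hadd f g hf hg => simp only [map_add, LinearMap.add_apply, hf, hg]
  | hs l c =>
    simp only [map_smul, LinearMap.smul_apply]
    congr 1
    induction y using QSA.induction_lin with
    | h0 => simp only [map_zero, LinearMap.zero_apply, LinearMap.map_zero]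
    | hadd f g hf hg => simp only [map_add, LinearMap.add_apply, hf, hg]
    | hs m d =>
      simp only [map_smul, LinearMap.smul_apply]
      congr 1
      induction z using QSA.induction_lin with
      | h0 => simp only [map_zero, LinearMap.map_zero]
      | hadd f g hf hg => simp only [map_add, hf, hg]
      | hs n e =>
        simp only [map_smul, mulA_bA_bA]
        congr 1
        exact assoc_basis l m n

instance (priority := 2000) : CommRing QSA :=
  { (inferInstance : AddCommGroup QSA) with
    mul := fun x y => mulA x y
    one := bA []
    mul_assoc := mulA_assoc
    one_mul := one_mulA
    mul_one := mulA_one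
    mul_comm := mulA_comm
    left_distrib := fun a b c => map_add (mulA a) b c
    right_distrib := fun a b c => by
      show mulA (a + b) c = mulA a c + mulA b c
      rw [map_add]; rfl
    zero_mul := fun a => by show mulA 0 a = 0; rw [map_zero]; rfl
    mul_zero := fun a => map_zero (mulA a) }

lemma mul_def' (x y : QSA) : x * y = mulA x y := rfl
lemma one_def' : (1 : QSA) = bA [] := rfl

instance (priority := 2000) : IsScalarTower CC QSA QSA :=
  ⟨fun c x y => by
    show (c • x) * y = c • (x * y)
    rw [mul_def', mul_def', map_smul, LinearMap.smul_apply]⟩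

instance (priority := 2000) : SMulCommClass CC QSA QSA :=
  ⟨fun c x y => by
    show c • (x * y) = x * (c • y)
    rw [mul_def', mul_def', map_smul]⟩

instance (priority := 2000) : IsScalarTower ℚ QSA QSA :=
  ⟨fun r x y => by
    show (r • x) * y = r • (x * y)
    rw [← algebraMap_smul CC r x, ← algebraMap_smul CC r (x * y), smul_mul_assoc]⟩

instance (priority := 2000) : SMulCommClass ℚ QSA QSA :=
  ⟨fun r x y => by
    show r • (x * y) = x * (r • y)
    rw [← algebraMap_smul CC r y, ← algebraMap_smul CC r (x * y), mul_smul_comm]⟩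


open PowerSeries

/-! ### Power series over QSA -/

def gb (n : ℕ) : QSA := bA (List.replicate n 0)

lemma gb_zero : gb 0 = 1 := rfl

def GS : PowerSeries QSA := PowerSeries.mk gb
def FS : PowerSeries QSA := GS - 1
def phiA : PowerSeries QSA := PowerSeries.mk fun n =>
  if n = 0 then 0 else ((-1:ℚ)^(n-1)/(n:ℚ)) • bA [n-1]
def WS : PowerSeries QSA := PowerSeries.mk fun j =>
  if j = 0 then 0 else ((-1:ℚ)^(j-1)) • bA [j-1]

lemma coeff_qsmul (r : ℚ) (F : PowerSeries QSA) (n : ℕ) :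
    PowerSeries.coeff (R := QSA) n (r • F) = r • PowerSeries.coeff (R := QSA) n F := rfl

def DD (F : PowerSeries QSA) : PowerSeries QSA :=
  PowerSeries.mk fun n => (n : ℚ) • PowerSeries.coeff (R := QSA) n F

lemma coeff_DD (F : PowerSeries QSA) (n : ℕ) :
    PowerSeries.coeff (R := QSA) n (DD F) = (n : ℚ) • PowerSeries.coeff (R := QSA) n F :=
  PowerSeries.coeff_mk _ _

lemma DD_add (F G : PowerSeries QSA) : DD (F + G) = DD F + DD G := by
  ext n
  simp [coeff_DD, smul_add]

lemma DD_sub (F G : PowerSeries QSA) : DD (F - G) = DD F - DD G := by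
  ext n
  simp [coeff_DD, smul_sub]

lemma DD_smul (r : ℚ) (F : PowerSeries QSA) : DD (r • F) = r • DD F := by
  ext n
  rw [coeff_DD, coeff_qsmul, coeff_qsmul, coeff_DD]
  exact smul_comm _ _ _

lemma DD_one : DD (1 : PowerSeries QSA) = 0 := by
  ext n
  rw [coeff_DD, PowerSeries.coeff_one, map_zero]
  rcases Nat.eq_zero_or_pos n with h | h
  · rw [if_pos h, h, Nat.cast_zero, zero_smul]
  · rw [if_neg (by omega), smul_zero]

lemma DD_mul (F G : PowerSeries QSA) : DD (F * G) = DD F * G + F * DD G := by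
  ext n
  simp only [coeff_DD, PowerSeries.coeff_mul, map_add, Finset.smul_sum]
  rw [← Finset.sum_add_distrib]
  apply Finset.sum_congr rfl
  intro p hp
  rw [Finset.HasAntidiagonal.mem_antidiagonal] at hp
  rw [smul_mul_assoc, mul_smul_comm, ← add_smul, ← Nat.cast_add, hp]

lemma DD_pow (F : PowerSeries QSA) (n : ℕ) :
    DD (F ^ (n+1)) = ((n+1 : ℕ) : ℚ) • (F ^ n * DD F) := by
  induction n with
  | zero => simp
  | succ n ih =>
      have : F ^ (n+2) = F ^ (n+1) * F := pow_succ F (n+1)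
      rw [this, DD_mul, ih, smul_mul_assoc]
      have h1 : F ^ n * DD F * F = F ^ (n+1) * DD F := by ring
      have h2 : ((n+2 : ℕ) : ℚ) = ((n+1 : ℕ) : ℚ) + 1 := by push_cast; ring
      rw [h1, h2, add_smul, one_smul]

/-! ### the star identity -/

def Bk (k : ℕ) : ℕ → QSA
  | 0 => bA [k]
  | (m+1) => bA (k :: List.replicate (m+1) 0) + consA 0 (Bk k m)

lemma mul_gb (k m : ℕ) : mulA (bA [k]) (gb (m+1)) = Bk k (m+1) + Bk (k+1) m := by
  induction m with
  | zero =>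
      have h1 : gb 1 = bA [0] := rfl
      rw [h1, mulA_bA_bA, HSA_cons_cons]
      simp only [HSA_nil_left, HSA_nil_right, consA_bA]
      have h2 : k + 0 + 1 = k + 1 := by omega
      rw [h2]
      show _ = (bA (k :: List.replicate 1 0) + consA 0 (bA [k])) + bA [k+1]
      rw [consA_bA]
      show bA [k, 0] + bA [0, k] + bA [k+1] = bA [k, 0] + bA [0, k] + bA [k+1]
      rfl
  | succ m ih =>
      have h1 : gb (m+2) = bA (0 :: List.replicate (m+1) 0) := by
        show bA (List.replicate (m+2) 0) = _
        rw [List.replicate_succ]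
      rw [h1, mulA_bA_bA, HSA_cons_cons]
      simp only [HSA_nil_left, consA_bA]
      have h2 : HSA [k] (List.replicate (m+1) 0) = mulA (bA [k]) (gb (m+1)) :=
        (mulA_bA_bA [k] (List.replicate (m+1) 0)).symm
      rw [h2, ih, map_add]
      have h3 : k + 0 + 1 = k + 1 := by omega
      rw [h3]
      have h4 : (k :: 0 :: List.replicate (m+1) 0) = k :: List.replicate (m+2) 0 := by
        rw [List.replicate_succ (a := (0:ℕ)) (n := m+1)]
      rw [h4]
      show _ = (bA (k :: List.replicate (m+2) 0) + consA 0 (Bk k (m+1)))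
        + (bA ((k+1) :: List.replicate (m+1) 0) + consA 0 (Bk (k+1) m))
      abel

lemma Bk_zero_eq (m : ℕ) : Bk 0 m = (m+1 : ℕ) • gb (m+1) := by
  induction m with
  | zero =>
      show bA [0] = (1 : ℕ) • gb 1
      rw [one_nsmul]
      rfl
  | succ m ih =>
      show bA (0 :: List.replicate (m+1) 0) + consA 0 (Bk 0 m) = _
      have h1 : bA (0 :: List.replicate (m+1) 0) = gb (m+2) := rfl
      have h2 : consA 0 (gb (m+1)) = gb (m+2) := by
        show consA 0 (bA (List.replicate (m+1) 0)) = bA (List.replicate (m+2) 0)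
        rw [consA_bA]
        exact rfl
      rw [h1, ih, map_nsmul, h2, add_comm]
      exact (succ_nsmul (gb (m+2)) (m+1)).symm

lemma starQ (M : ℕ) :
    ∑ k ∈ Finset.range (M+1), ((-1:ℚ)^k) • (mulA (bA [k]) (gb (M-k)))
      = ((M+1 : ℕ) : ℚ) • gb (M+1) := by
  set f : ℕ → QSA := fun j => if j ≤ M then ((-1:ℚ)^j) • Bk j (M-j) else 0 with hf
  have hterm : ∀ k ∈ Finset.range (M+1),
      ((-1:ℚ)^k) • (mulA (bA [k]) (gb (M-k))) = f k - f (k+1) := by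
    intro k hk
    rw [Finset.mem_range] at hk
    have hkM : k ≤ M := by omega
    rcases Nat.lt_or_ge k M with hlt | hge
    · have hm : M - k = (M - k - 1) + 1 := by omega
      rw [hm, mul_gb]
      have hfk : f k = ((-1:ℚ)^k) • Bk k (M - k - 1 + 1) := by
        rw [hf]; simp only [if_pos hkM]; rw [← hm]
      have hfk1 : f (k+1) = ((-1:ℚ)^(k+1)) • Bk (k+1) (M - k - 1) := by
        rw [hf]; simp only [if_pos (by omega : k + 1 ≤ M)]
        have : M - (k+1) = M - k - 1 := by omega
        rw [this]
      rw [hfk, hfk1, pow_succ]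
      rw [smul_add]
      have : (-1:ℚ)^k * -1 = -((-1:ℚ)^k) := by ring
      rw [this, neg_smul, sub_neg_eq_add]
    · have h0 : M - k = 0 := by omega
      rw [h0]
      have hgb0 : gb 0 = bA [] := rfl
      rw [hgb0, mulA_one]
      have hfM : f k = ((-1:ℚ)^k) • bA [k] := by
        rw [hf]; simp only [if_pos hkM, h0]; exact rfl
      have hfM1 : f (k+1) = 0 := by
        rw [hf]; simp only [if_neg (by omega : ¬ (k+1 ≤ M))]
      rw [hfM, hfM1, sub_zero]
  rw [Finset.sum_congr rfl hterm, Finset.sum_range_sub' f (M+1)]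
  have hfM1 : f (M+1) = 0 := by
    rw [hf]; simp only [if_neg (by omega : ¬ (M+1 ≤ M))]
  have hf0 : f 0 = Bk 0 M := by
    rw [hf]; simp only [if_pos (Nat.zero_le M), pow_zero, one_smul, Nat.sub_zero]
  rw [hfM1, hf0, sub_zero, Bk_zero_eq, Nat.cast_smul_eq_nsmul]


lemma coeff_GS (n : ℕ) : PowerSeries.coeff (R := QSA) n GS = gb n := PowerSeries.coeff_mk _ _

lemma GS_eq : GS = 1 + FS := by rw [FS]; ring

lemma coeff_FS_zero : PowerSeries.coeff (R := QSA) 0 FS = 0 := by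
  rw [FS, map_sub, coeff_GS, gb_zero, PowerSeries.coeff_zero_one, sub_self]

lemma DD_FS : DD FS = DD GS := by
  rw [FS, DD_sub, DD_one, sub_zero]

lemma DD_zero : DD (0 : PowerSeries QSA) = 0 := by
  ext n
  rw [coeff_DD, map_zero, smul_zero]

lemma DD_sum {α : Type} (s : Finset α) (F : α → PowerSeries QSA) :
    DD (∑ i ∈ s, F i) = ∑ i ∈ s, DD (F i) := by
  classical
  induction s using Finset.induction_on with
  | empty => simpa using DD_zero
  | insert x s hx ih =>
      rw [Finset.sum_insert hx, Finset.sum_insert hx, DD_add, ih]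

lemma DG : DD GS = WS * GS := by
  ext N
  rw [coeff_DD, coeff_GS, PowerSeries.coeff_mul,
    Finset.Nat.sum_antidiagonal_eq_sum_range_succ_mk]
  cases N with
  | zero =>
      rw [Nat.cast_zero, zero_smul]
      rw [Finset.sum_range_one]
      have hW0 : PowerSeries.coeff (R := QSA) 0 WS = 0 := by
        rw [WS, PowerSeries.coeff_mk, if_pos rfl]
      rw [hW0, zero_mul]
  | succ M =>
      rw [Finset.sum_range_succ']
      have hW0 : PowerSeries.coeff (R := QSA) 0 WS = 0 := by
        rw [WS, PowerSeries.coeff_mk, if_pos rfl]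
      rw [hW0, zero_mul, add_zero]
      have hterm : ∀ k ∈ Finset.range (M+1),
          PowerSeries.coeff (R := QSA) (k+1) WS * PowerSeries.coeff (R := QSA) (M+1-(k+1)) GS
            = ((-1:ℚ)^k) • (mulA (bA [k]) (gb (M-k))) := by
        intro k hk
        rw [WS, PowerSeries.coeff_mk, if_neg (by omega), coeff_GS]
        have h1 : k + 1 - 1 = k := by omega
        have h2 : M + 1 - (k+1) = M - k := by omega
        rw [h1, h2, smul_mul_assoc, mul_def']
      rw [Finset.sum_congr rfl hterm, starQ]

lemma DphiA : DD phiA = WS := by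
  ext j
  rw [coeff_DD, phiA, WS, PowerSeries.coeff_mk, PowerSeries.coeff_mk]
  cases j with
  | zero => rw [if_pos rfl, if_pos rfl, smul_zero]
  | succ j =>
      rw [if_neg (by omega), if_neg (by omega)]
      have h1 : j + 1 - 1 = j := by omega
      rw [h1, smul_smul]
      congr 1
      have hne : ((j:ℚ) + 1) ≠ 0 := by positivity
      push_cast
      field_simp

lemma coeff_errvanish (N n : ℕ) (hn : n ≤ N) : PowerSeries.coeff (R := QSA) n (FS^N * DD FS) = 0 := by
  obtain ⟨Z, hZ⟩ : PowerSeries.X ∣ FS := by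
    rw [PowerSeries.X_dvd_iff, ← PowerSeries.coeff_zero_eq_constantCoeff_apply]
    exact coeff_FS_zero
  have h1 : FS^N * DD FS = (Z^N * DD FS) * PowerSeries.X^N := by
    rw [hZ]; ring
  rw [h1, PowerSeries.coeff_mul_X_pow']
  rcases Nat.lt_or_ge n N with h | h
  · rw [if_neg (by omega)]
  · have hnN : n = N := by omega
    rw [if_pos (by omega)]
    have h2 : n - N = 0 := by omega
    rw [h2, PowerSeries.coeff_zero_eq_constantCoeff_apply, map_mul]
    have h3 : PowerSeries.constantCoeff (R := QSA) (DD FS) = 0 := by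
      rw [← PowerSeries.coeff_zero_eq_constantCoeff_apply, coeff_DD, Nat.cast_zero, zero_smul]
    rw [h3, mul_zero]

lemma keyA (N : ℕ) (hN : 1 ≤ N) :
    ∑ j ∈ Finset.range N, ((-1:ℚ)^j/((j:ℚ)+1)) • (PowerSeries.coeff (R := QSA) N (FS^(j+1)))
      = ((-1:ℚ)^(N-1)/(N:ℚ)) • bA [N-1] := by
  set LN : PowerSeries QSA := ∑ j ∈ Finset.range N, ((-1:ℚ)^j/((j:ℚ)+1)) • FS^(j+1) with hLN
  have hDDLN : DD LN = ∑ j ∈ Finset.range N, ((-1:ℚ)^j) • (FS^j * DD FS) := by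
    rw [hLN, DD_sum]
    refine Finset.sum_congr rfl fun j _ => ?_
    rw [DD_smul, DD_pow, smul_smul]
    congr 1
    have hne : ((j:ℚ) + 1) ≠ 0 := by positivity
    push_cast
    field_simp
  have htel : DD LN * GS = DD GS - ((-1:ℚ)^N) • (FS^N * DD FS) := by
    rw [hDDLN, Finset.sum_mul]
    have hterm : ∀ j ∈ Finset.range N,
        (((-1:ℚ)^j) • (FS^j * DD FS)) * GS
          = (((-1:ℚ)^j) • (FS^j * DD FS)) - (((-1:ℚ)^(j+1)) • (FS^(j+1) * DD FS)) := by
      intro j _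
      have h2 : (((-1:ℚ)^(j+1)) • (FS^(j+1) * DD FS))
          = -((((-1:ℚ)^j) • (FS^j * DD FS)) * FS) := by
        rw [smul_mul_assoc]
        have h3 : FS^j * DD FS * FS = FS^(j+1) * DD FS := by ring
        rw [h3, pow_succ (-1:ℚ) j, mul_smul, neg_one_smul, smul_neg]
      rw [GS_eq, mul_add, mul_one, h2, sub_neg_eq_add]
    rw [Finset.sum_congr rfl hterm,
      Finset.sum_range_sub' (fun j => ((-1:ℚ)^j) • (FS^j * DD FS)) N]
    rw [pow_zero, one_smul, pow_zero, one_mul, DD_FS]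
  have hprod : (DD LN - DD phiA) * GS = -(((-1:ℚ)^N) • (FS^N * DD FS)) := by
    have hpg : DD phiA * GS = DD GS := by rw [DphiA, ← DG]
    rw [sub_mul, htel, hpg]
    abel
  have hzero : ∀ n, n ≤ N → PowerSeries.coeff (R := QSA) n (DD LN - DD phiA) = 0 := by
    intro n
    induction n using Nat.strong_induction_on with
    | _ n ih =>
      intro hn
      have h1 : PowerSeries.coeff (R := QSA) n ((DD LN - DD phiA) * GS) = 0 := by
        rw [hprod, map_neg, coeff_qsmul, coeff_errvanish N n hn, smul_zero, neg_zero]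
      rw [PowerSeries.coeff_mul, Finset.Nat.sum_antidiagonal_eq_sum_range_succ_mk,
        Finset.sum_range_succ] at h1
      have h2 : ∀ k ∈ Finset.range n,
          PowerSeries.coeff (R := QSA) k (DD LN - DD phiA) * PowerSeries.coeff (R := QSA) (n-k) GS = 0 := by
        intro k hk
        rw [Finset.mem_range] at hk
        rw [ih k hk (by omega), zero_mul]
      rw [Finset.sum_congr rfl h2, Finset.sum_const_zero, zero_add] at h1
      have h3 : n - n = 0 := by omega
      rw [h3, coeff_GS, gb_zero, mul_one] at h1
      exact h1
  have hN' := hzero N le_rfl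
  rw [map_sub, coeff_DD, coeff_DD, sub_eq_zero] at hN'
  have hNne : ((N:ℚ)) ≠ 0 := Nat.cast_ne_zero.mpr (by omega)
  have hcan : PowerSeries.coeff (R := QSA) N LN = PowerSeries.coeff (R := QSA) N phiA := by
    have h4 := congrArg (fun x => (N:ℚ)⁻¹ • x) hN'
    simpa [smul_smul, inv_mul_cancel₀ hNne] using h4
  have hL : PowerSeries.coeff (R := QSA) N LN
      = ∑ j ∈ Finset.range N, ((-1:ℚ)^j/((j:ℚ)+1)) • (PowerSeries.coeff (R := QSA) N (FS^(j+1))) := by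
    rw [hLN, map_sum]
    exact Finset.sum_congr rfl fun j _ => coeff_qsmul _ _ _
  have hPhi : PowerSeries.coeff (R := QSA) N phiA = ((-1:ℚ)^(N-1)/(N:ℚ)) • bA [N-1] := by
    rw [phiA, PowerSeries.coeff_mk, if_neg (by omega)]
  rw [← hL, hcan, hPhi]



/-! ### The `u`-basis of `Ĥ¹` and the key stuffle identities -/

def Uv (k : ℕ) : H := av^(k+1) * bv

def uword (l : List ℕ) : H := (l.map Uv).prod

lemma uword_nil : uword [] = 1 := rfl

lemma uword_cons (k : ℕ) (l : List ℕ) : uword (k :: l) = Uv k * uword l := by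
  simp [uword]

lemma ev_zero_eq : ev 0 = Uv 0 := by
  show av * bv = av^1 * bv
  rw [pow_one]

lemma ev_succ_eq (k : ℕ) : ev (k+2) = Uv (k+1) + hb • Uv k := by
  show av ^ (k+1) * (av + algebraMap CC H hb) * bv = _
  rw [mul_add, add_mul]
  have h1 : av^(k+1) * av * bv = av^(k+2) * bv := by rw [← pow_succ]
  have h2 : av^(k+1) * algebraMap CC H hb * bv = hb • (av^(k+1) * bv) := by
    rw [← Algebra.commutes hb (av^(k+1)), mul_assoc, ← Algebra.smul_def]
  rw [h1, h2]
  rfl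

lemma Uv_succ_eq (k : ℕ) : Uv (k+1) = ev (k+2) - hb • Uv k := by
  rw [ev_succ_eq, add_sub_cancel_right]

lemma circ_zz : circ 0 0 = Uv 1 := by
  show ev 2 - hb • ev 0 = Uv 1
  have h : ev 2 = Uv 1 + hb • Uv 0 := ev_succ_eq 0
  rw [h, ev_zero_eq, add_sub_cancel_right]

lemma circ_zs (l : ℕ) : circ 0 (l+1) = ev (l+2) := rfl
lemma circ_sz (k : ℕ) : circ (k+1) 0 = ev (k+2) := rfl
lemma circ_ss (k l : ℕ) : circ (k+1) (l+1) = ev (k+l+2) + hb • ev (k+l+1) := rfl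

lemma eword_mem (l : List ℕ) : eword l ∈ H1 :=
  Submodule.subset_span ⟨l, rfl⟩

lemma ev_mul_mem (k : ℕ) {x : H} (hx : x ∈ H1) : ev k * x ∈ H1 := by
  induction hx using Submodule.span_induction with
  | mem y hy =>
      obtain ⟨l, rfl⟩ := hy
      have h : ev k * eword l = eword (k :: l) := by simp [eword]
      rw [h]; exact eword_mem _
  | zero => rw [mul_zero]; exact zero_mem _
  | add y z hy hz hy' hz' => rw [mul_add]; exact add_mem hy' hz'
  | smul c y hy hy' => rw [mul_smul_comm]; exact Submodule.smul_mem _ _ hy'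

lemma Uv_mul_mem (k : ℕ) {x : H} (hx : x ∈ H1) : Uv k * x ∈ H1 := by
  induction k with
  | zero => rw [← ev_zero_eq]; exact ev_mul_mem 0 hx
  | succ k ih =>
      rw [Uv_succ_eq, sub_mul, smul_mul_assoc]
      exact sub_mem (ev_mul_mem _ hx) (Submodule.smul_mem _ _ ih)

lemma uword_mem (l : List ℕ) : uword l ∈ H1 := by
  induction l with
  | nil => rw [uword_nil]; exact Submodule.subset_span ⟨[], rfl⟩
  | cons k l ih => rw [uword_cons]; exact Uv_mul_mem k ih

section KeyIdentities

variable {st : H →ₗ[CC] H →ₗ[CC] H}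

lemma st_eU (hst : IsStuffle st) (k : ℕ) : ∀ (k' : ℕ) (w w' : H), w ∈ H1 → w' ∈ H1 →
    st (ev (k+1) * w) (Uv k' * w') =
      ev (k+1) * st w (Uv k' * w') + Uv k' * st (ev (k+1) * w) w'
        + ev (k+k'+2) * st w w' := by
  intro k'
  induction k' with
  | zero =>
      intro w w' hw hw'
      rw [← ev_zero_eq]
      rw [hst.2.2 (k+1) 0 w w' hw hw', circ_sz]
  | succ k' ih =>
      intro w w' hw hw'
      have hU : Uv (k'+1) * w' = ev (k'+2) * w' - hb • (Uv k' * w') := by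
        rw [Uv_succ_eq, sub_mul, smul_mul_assoc]
      rw [hU]
      simp only [map_sub, map_smul]
      rw [hst.2.2 (k+1) (k'+2) w w' hw hw']
      rw [show circ (k+1) (k'+2) = ev (k + (k'+1) + 2) + hb • ev (k + (k'+1) + 1) from
        circ_ss k (k'+1)]
      rw [ih w w' hw hw']
      rw [show k + (k'+1) + 1 = k + k' + 2 from by omega,
        show k + (k'+1) + 2 = k + k' + 3 from by omega]
      rw [show Uv (k'+1) = ev (k'+2) - hb • Uv k' from Uv_succ_eq k']
      simp only [mul_add, mul_sub, add_mul, sub_mul, smul_add, smul_sub,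
        smul_mul_assoc, mul_smul_comm, smul_smul]
      abel


lemma st_e0U (hst : IsStuffle st) : ∀ (k' : ℕ) (w w' : H), w ∈ H1 → w' ∈ H1 →
    st (ev 0 * w) (Uv k' * w') =
      ev 0 * st w (Uv k' * w') + Uv k' * st (ev 0 * w) w'
        + Uv (k'+1) * st w w' := by
  intro k'
  induction k' with
  | zero =>
      intro w w' hw hw'
      rw [← ev_zero_eq]
      rw [hst.2.2 0 0 w w' hw hw', circ_zz]
  | succ k' ih =>
      intro w w' hw hw'
      have hU : Uv (k'+1) * w' = ev (k'+2) * w' - hb • (Uv k' * w') := by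
        rw [Uv_succ_eq, sub_mul, smul_mul_assoc]
      rw [hU]
      simp only [map_sub, map_smul]
      rw [hst.2.2 0 (k'+2) w w' hw hw']
      rw [show circ 0 (k'+2) = ev ((k'+1)+2) from circ_zs (k'+1)]
      rw [show k'+1+2 = k'+3 from by omega]
      rw [ih w w' hw hw']
      rw [show Uv (k'+1+1) = ev (k'+3) - hb • Uv (k'+1) from by
        rw [Uv_succ_eq (k'+1), show k'+1+2 = k'+3 from by omega]]
      rw [show Uv (k'+1) = ev (k'+2) - hb • Uv k' from Uv_succ_eq k']
      simp only [mul_add, mul_sub, add_mul, sub_mul, smul_add, smul_sub,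
        smul_mul_assoc, mul_smul_comm, smul_smul]
      abel

lemma st_UU (hst : IsStuffle st) : ∀ (k k' : ℕ) (w w' : H), w ∈ H1 → w' ∈ H1 →
    st (Uv k * w) (Uv k' * w') =
      Uv k * st w (Uv k' * w') + Uv k' * st (Uv k * w) w'
        + Uv (k+k'+1) * st w w' := by
  intro k
  induction k with
  | zero =>
      intro k' w w' hw hw'
      rw [← ev_zero_eq]
      rw [st_e0U hst k' w w' hw hw']
      rw [show (0:ℕ) + k' + 1 = k' + 1 from by omega]
  | succ k ih =>
      intro k' w w' hw hw'
      have hU : Uv (k+1) * w = ev (k+2) * w - hb • (Uv k * w) := by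
        rw [Uv_succ_eq, sub_mul, smul_mul_assoc]
      rw [hU]
      simp only [map_sub, map_smul, LinearMap.sub_apply, LinearMap.smul_apply]
      rw [st_eU hst (k+1) k' w w' hw hw']
      rw [ih k' w w' hw hw']
      rw [show k+1+k'+2 = k+k'+3 from by omega]
      rw [show Uv (k+1+k'+1) = ev (k+k'+3) - hb • Uv (k+k'+1) from by
        have e : k+1+k'+1 = k+k'+1+1 := by omega
        rw [e, Uv_succ_eq (k+k'+1), show k+k'+1+2 = k+k'+3 from by omega]]
      rw [show Uv (k+1) = ev (k+2) - hb • Uv k from Uv_succ_eq k]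
      simp only [mul_add, mul_sub, add_mul, sub_mul, smul_add, smul_sub,
        smul_mul_assoc, mul_smul_comm, smul_smul]
      abel

/-! ### Transport from the abstract harmonic algebra to `H` -/

def thH : QSA →ₗ[CC] H :=
  Finsupp.lsum CC fun l => LinearMap.toSpanSingleton CC H (uword l)

lemma thH_bA (l : List ℕ) : thH (bA l) = uword l := by
  have h : thH (bA l) = (Finsupp.lsum CC fun l => LinearMap.toSpanSingleton CC H (uword l))
      (Finsupp.single l (1:CC)) := rfl
  rw [h, Finsupp.lsum_single, LinearMap.toSpanSingleton_apply_one]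

lemma thH_consA (k : ℕ) (x : QSA) : thH (consA k x) = Uv k * thH x := by
  have h : thH ∘ₗ consA k = (LinearMap.mulLeft CC (Uv k)) ∘ₗ thH := by
    refine lin_ext fun l => ?_
    simp only [LinearMap.comp_apply, consA_bA, thH_bA, LinearMap.mulLeft_apply, uword_cons]
  have h2 := LinearMap.congr_fun h x
  simpa using h2

lemma stuffle_uword (hst : IsStuffle st) : ∀ (l l' : List ℕ), st (uword l) (uword l') = thH (HSA l l') := by
  intro l l'
  match l, l' with
  | [], l' =>
      rw [uword_nil, hst.1 (uword l'), HSA_nil_left, thH_bA]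
  | (k :: l), [] =>
      rw [uword_nil, hst.2.1 (uword (k :: l)), HSA_nil_right, thH_bA]
  | (k :: l), (k' :: l') =>
      rw [uword_cons k l, uword_cons k' l']
      rw [st_UU hst k k' (uword l) (uword l') (uword_mem l) (uword_mem l')]
      rw [← uword_cons k l, ← uword_cons k' l']
      rw [stuffle_uword hst l (k' :: l'), stuffle_uword hst (k :: l) l', stuffle_uword hst l l']
      rw [HSA_cons_cons, map_add, map_add, thH_consA, thH_consA, thH_consA]
termination_by l l' => l.length + l'.length

lemma st_thH (hst : IsStuffle st) : ∀ (x y : QSA), st (thH x) (thH y) = thH (mulA x y) := by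
  intro x y
  induction x using QSA.induction_lin with
  | h0 => simp only [map_zero, LinearMap.zero_apply]
  | hadd f g hf hg => simp only [map_add, LinearMap.add_apply, hf, hg]
  | hs l c =>
      simp only [map_smul, LinearMap.smul_apply]
      congr 1
      induction y using QSA.induction_lin with
      | h0 => simp only [map_zero, LinearMap.map_zero]
      | hadd f g hf hg => simp only [map_add, hf, hg]
      | hs m d =>
          simp only [map_smul]
          congr 1
          rw [thH_bA, thH_bA, mulA_bA_bA]
          exact stuffle_uword hst l m


/-! ### Coefficient transport and the final assembly -/

lemma uword_replicate (n : ℕ) : uword (List.replicate n 0) = (av * bv) ^ n := by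
  induction n with
  | zero => rw [List.replicate_zero, uword_nil, pow_zero]
  | succ n ih =>
      rw [List.replicate_succ, uword_cons, ih]
      rw [show Uv 0 = av * bv from by rw [← ev_zero_eq]; rfl]
      rw [pow_succ']

lemma coeff_geom_sub_one (p : ℕ) :
    PowerSeries.coeff (R := H) p (geom - 1) = thH (PowerSeries.coeff (R := QSA) p FS) := by
  have hgeom : PowerSeries.coeff (R := H) p geom = (av * bv)^p := by
    rw [geom, PowerSeries.coeff_mk]
  cases p with
  | zero =>
      rw [map_sub, hgeom, pow_zero, PowerSeries.coeff_zero_one, sub_self]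
      rw [FS, map_sub, coeff_GS, gb_zero, PowerSeries.coeff_zero_one, sub_self, map_zero]
  | succ p =>
      rw [map_sub, hgeom, PowerSeries.coeff_one, if_neg (Nat.succ_ne_zero p), sub_zero]
      rw [FS, map_sub, coeff_GS, PowerSeries.coeff_one, if_neg (Nat.succ_ne_zero p), sub_zero]
      rw [show gb (p+1) = bA (List.replicate (p+1) 0) from rfl, thH_bA, uword_replicate]

lemma itpow_transport (hst : IsStuffle st) (n : ℕ) : ∀ N : ℕ,
    PowerSeries.coeff (R := H) N (itpow st (geom - 1) (n+1))
      = thH (PowerSeries.coeff (R := QSA) N (FS^(n+1))) := by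
  induction n with
  | zero =>
      intro N
      rw [show itpow st (geom - 1) 1 = geom - 1 from rfl, pow_one]
      exact coeff_geom_sub_one N
  | succ n ih =>
      intro N
      rw [show itpow st (geom - 1) (n+2) = extMul st (geom - 1) (itpow st (geom - 1) (n+1))
        from rfl]
      rw [extMul, PowerSeries.coeff_mk]
      rw [show FS^(n+2) = FS * FS^(n+1) from pow_succ' FS (n+1)]
      rw [PowerSeries.coeff_mul, map_sum]
      refine Finset.sum_congr rfl fun p _ => ?_
      rw [coeff_geom_sub_one, ih, st_thH hst, mul_def']

end KeyIdentities

lemma sum_Icc_one {M : Type*} [AddCommMonoid M] (f : ℕ → M) (N : ℕ) :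
    ∑ n ∈ Finset.Icc 1 N, f n = ∑ j ∈ Finset.range N, f (j+1) := by
  induction N with
  | zero => simp
  | succ n ih =>
      rw [Finset.sum_range_succ, ← ih, Finset.sum_Icc_succ_top (by omega : 1 ≤ n+1)]


/-- `φ(X) = log_{*_q}(1/(1 − e_{1̄}X))` in `Ĥ¹[[X]]`. -/
theorem phi_eq_stuffle_log (st : H →ₗ[CC] H →ₗ[CC] H) (hst : IsStuffle st) :
    phiS = serlog st (geom - 1) := by
  ext N
  rw [phiS, serlog, PowerSeries.coeff_mk, PowerSeries.coeff_mk]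
  rw [sum_Icc_one (fun n => qs ((-1:ℚ)^(n-1)/(n:ℚ)) • PowerSeries.coeff (R := H) N
    (itpow st (geom - 1) n)) N]
  have hterm : ∀ j ∈ Finset.range N,
      qs ((-1:ℚ)^((j+1)-1)/((j+1 : ℕ):ℚ)) • PowerSeries.coeff (R := H) N (itpow st (geom - 1) (j+1))
        = thH (((-1:ℚ)^j/((j:ℚ)+1)) • PowerSeries.coeff (R := QSA) N (FS^(j+1))) := by
    intro j _
    have hsc : qs ((-1:ℚ)^((j+1)-1)/((j+1 : ℕ):ℚ)) = algebraMap ℚ CC ((-1:ℚ)^j/((j:ℚ)+1)) := by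
      unfold qs
      congr 1
      rw [Nat.add_sub_cancel]
      push_cast
      ring
    rw [itpow_transport hst j N,
      ← algebraMap_smul CC ((-1:ℚ)^j/((j:ℚ)+1)) (PowerSeries.coeff (R := QSA) N (FS^(j+1))),
      map_smul, hsc]
  rw [Finset.sum_congr rfl hterm, ← map_sum]
  cases N with
  | zero =>
      rw [if_pos rfl, Finset.range_zero, Finset.sum_empty, map_zero]
  | succ M =>
      rw [if_neg (Nat.succ_ne_zero M)]
      rw [keyA (M+1) (by omega)]
      rw [← algebraMap_smul CC ((-1:ℚ)^(M+1-1)/((M+1 : ℕ):ℚ)) (bA [M+1-1]),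
        map_smul, thH_bA]
      simp only [Nat.add_sub_cancel]
      rw [show uword [M] = av^(M+1) * bv from by rw [uword_cons, uword_nil, mul_one]; rfl]
      rfl

end
end

section
/- Set D^⧢_X = Σ_{n≥1} X^n d_n, ψ(X) = (1/ℏ)·a·log(1 + ℏbX), and define ρ_s(X) ∈ Ĥ¹[[X]] by ρ_1(X) = 1 and ρ_{s+1}(X) = (ψ(X) + log(1 + ℏbX))·ρ_s(X) + ψ(X) ⧢_q ρ_s(X) for s ≥ 1. Then: (i) for every s ≥ 1 and every w ∈ H[[X]], (D^⧢_X)^s(w) = (ψ(X)ρ_s(X)) ⧢_q w − ψ(X)·(ρ_s(X) ⧢_q w); and (ii) for every s ≥ 1, ψ(X)ρ_s(X) = ψ(X)^{⧢_q s} (the s-fold shuffle power). -/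
set_option maxRecDepth 8000


noncomputable section

/-- The `𝒞[[X]]`-linear map `d_n(w) = ((−ℏ)^{n−1}/n)·((ab^n) ⧢_q w − ab^n·w)` on `H[[X]]`. -/
def dOp (sh : H →ₗ[CC] H →ₗ[CC] H) (n : ℕ) (f : PowerSeries H) : PowerSeries H :=
  PowerSeries.mk fun N =>
    (qs (1 / (n : ℚ)) * (-hb) ^ (n - 1)) •
      (sh (av * bv ^ n) (PowerSeries.coeff (R := H) N f) - av * bv ^ n * PowerSeries.coeff (R := H) N f)

/-- The operator `D^⧢_X = Σ_{n≥1} X^n d_n` on `H[[X]]`. -/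
def DshOp (sh : H →ₗ[CC] H →ₗ[CC] H) (f : PowerSeries H) : PowerSeries H :=
  PowerSeries.mk fun N =>
    ∑ n ∈ Finset.Icc 1 N, PowerSeries.coeff (R := H) (N - n) (dOp sh n f)

/-- `ρ_s(X)` (indexed so that `rhoAux sh s = ρ_{s+1}`): `ρ_1 = 1` and
`ρ_{s+1} = (ψ(X) + log(1+ℏbX))·ρ_s + ψ(X) ⧢_q ρ_s`. -/
def rhoAux (sh : H →ₗ[CC] H →ₗ[CC] H) : ℕ → PowerSeries H
  | 0 => 1
  | (s+1) => (psiS + lgS) * rhoAux sh s + extMul sh psiS (rhoAux sh s)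


section WordAux

def wprod (l : List (Fin 2)) : H := (l.map (FreeAlgebra.ι CC)).prod
lemma wprod_nil : wprod [] = 1 := rfl
lemma wprod_cons (i : Fin 2) (l : List (Fin 2)) :
    wprod (i :: l) = FreeAlgebra.ι CC i * wprod l := by simp [wprod]


def WSpan : Submodule CC H := Submodule.span CC (Set.range wprod)

lemma wprod_append (l l' : List (Fin 2)) : wprod (l ++ l') = wprod l * wprod l' := by
  simp [wprod]

lemma mul_mem_wspan {x y : H} (hx : x ∈ WSpan) (hy : y ∈ WSpan) : x * y ∈ WSpan := by
  induction hx using Submodule.span_induction with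
  | mem x hx =>
    obtain ⟨l, rfl⟩ := hx
    induction hy using Submodule.span_induction with
    | mem y hy =>
      obtain ⟨l', rfl⟩ := hy
      exact Submodule.subset_span ⟨l ++ l', wprod_append l l'⟩
    | zero => simp only [mul_zero]; exact Submodule.zero_mem _
    | add y z _ _ hy hz => rw [mul_add]; exact Submodule.add_mem _ hy hz
    | smul c y _ hy => rw [mul_smul_comm]; exact Submodule.smul_mem _ _ hy
  | zero => simp only [zero_mul]; exact Submodule.zero_mem _
  | add x z _ _ h1 h2 => rw [add_mul]; exact Submodule.add_mem _ h1 h2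
  | smul c x _ h1 => rw [smul_mul_assoc]; exact Submodule.smul_mem _ _ h1

lemma mem_wspan (x : H) : x ∈ WSpan := by
  induction x using FreeAlgebra.induction with
  | grade0 r =>
    have h : (algebraMap CC H r) = r • wprod [] := by
      simp [wprod_nil, Algebra.algebraMap_eq_smul_one]
    rw [h]
    exact Submodule.smul_mem _ _ (Submodule.subset_span ⟨[], rfl⟩)
  | grade1 i => exact Submodule.subset_span ⟨[i], by simp [wprod_cons, wprod_nil]⟩
  | mul x y hx hy => exact mul_mem_wspan hx hy
  | add x y hx hy => exact Submodule.add_mem _ hx hy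

variable {sh : H →ₗ[CC] H →ₗ[CC] H} (hsh : IsShuffle sh)


section Elt
include hsh

lemma shb_left (n : ℕ) (x y : H) : sh (bv ^ n * x) y = bv ^ n * sh x y := by
  induction n with
  | zero => simp
  | succ n ih => rw [pow_succ', mul_assoc, hsh.2.2.2.1, ih, ← mul_assoc, ← pow_succ']

lemma shb_right (n : ℕ) (x y : H) : sh x (bv ^ n * y) = bv ^ n * sh x y := by
  induction n with
  | zero => simp
  | succ n ih => rw [pow_succ', mul_assoc, hsh.2.2.2.2, ih, ← mul_assoc, ← pow_succ']

lemma shb_only (n : ℕ) (y : H) : sh (bv ^ n) y = bv ^ n * y := by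
  have := shb_left hsh n 1 y
  simpa [hsh.1] using this

lemma shL0 (m : ℕ) (u : H) :
    sh (av * bv ^ m) (av * u) =
      av * (sh (av * bv ^ m) u + bv ^ m * (av * u) + hb • (bv ^ m * u)) := by
  rw [hsh.2.2.1, shb_only hsh, shb_only hsh]

lemma shAssoc_words : ∀ (n m : ℕ) (l₁ l₂ : List (Fin 2)), l₁.length + l₂.length ≤ n →
    sh (av * bv ^ m) (sh (wprod l₁) (wprod l₂))
      = sh (sh (av * bv ^ m) (wprod l₁)) (wprod l₂) := by
  intro n
  induction n with
  | zero =>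
    intro m l₁ l₂ hlen
    have h1 : l₁ = [] := by cases l₁ <;> simp_all
    have h2 : l₂ = [] := by cases l₂ <;> simp_all
    subst h1; subst h2
    simp [wprod_nil, hsh.1, hsh.2.1]
  | succ n ih =>
    intro m l₁ l₂ hlen
    rcases l₁ with _ | ⟨i, t₁⟩
    · rw [wprod_nil, hsh.1, hsh.2.1]
    rcases l₂ with _ | ⟨j, t₂⟩
    · rw [wprod_nil, hsh.2.1, hsh.2.1]
    fin_cases i <;> fin_cases j <;> simp only [Fin.zero_eta, Fin.mk_one] at hlen ⊢
    · -- both start with a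
      have e0 : (FreeAlgebra.ι CC (0 : Fin 2) : H) = av := rfl
      rw [wprod_cons, wprod_cons, e0]
      set u' := wprod t₁ with hu'
      set v' := wprod t₂ with hv'
      have lenA : (0 :: t₁ : List (Fin 2)).length + t₂.length ≤ n := by
        simp at hlen ⊢; omega
      have lenB : t₁.length + (0 :: t₂ : List (Fin 2)).length ≤ n := by
        simp at hlen ⊢; omega
      have lenC : t₁.length + t₂.length ≤ n := by simp at hlen; omega
      have ihA := ih m (0 :: t₁) t₂ lenA
      have ihB := ih m t₁ (0 :: t₂) lenB
      have ihC := ih m t₁ t₂ lenC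
      rw [wprod_cons, e0] at ihA
      rw [wprod_cons, e0] at ihB
      rw [← hu'] at ihA ihB ihC
      rw [← hv'] at ihA ihB ihC
      -- expand LHS
      have hS : sh (av * u') (av * v')
          = av * (sh (av * u') v' + sh u' (av * v') + hb • sh u' v') := hsh.2.2.1 u' v'
      have hP : sh (av * bv ^ m) (av * u')
          = av * (sh (av * bv ^ m) u' + bv ^ m * (av * u') + hb • (bv ^ m * u')) :=
        shL0 hsh m u'
      calc sh (av * bv ^ m) (sh (av * u') (av * v'))
          = av * ((sh (sh (av * bv ^ m) (av * u')) v'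
              + sh (sh (av * bv ^ m) u') (av * v')
              + hb • sh (sh (av * bv ^ m) u') v')
              + bv ^ m * (av * (sh (av * u') v' + sh u' (av * v') + hb • sh u' v'))
              + hb • (bv ^ m * (sh (av * u') v' + sh u' (av * v') + hb • sh u' v'))) := by
            rw [hS, shL0 hsh, map_add, map_add, map_smul, ihA, ihB, ihC]
        _ = sh (sh (av * bv ^ m) (av * u')) (av * v') := by
            rw [hP, hsh.2.2.1]
            simp only [map_add, map_smul, LinearMap.add_apply, LinearMap.smul_apply,
              shb_left hsh]
            simp only [hS, mul_add, smul_add, mul_smul_comm]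
            module
    · -- l₁ a, l₂ b
      have e1 : (FreeAlgebra.ι CC (1 : Fin 2) : H) = bv := rfl
      have len : (0 :: t₁ : List (Fin 2)).length + t₂.length ≤ n := by simp at hlen ⊢; omega
      have ihx := ih m (0 :: t₁) t₂ len
      rw [wprod_cons (1 : Fin 2), e1, hsh.2.2.2.2, hsh.2.2.2.2, ihx, hsh.2.2.2.2]
    · -- l₁ b
      have e1 : (FreeAlgebra.ι CC (1 : Fin 2) : H) = bv := rfl
      have len : t₁.length + ((0 : Fin 2) :: t₂ : List (Fin 2)).length ≤ n := by
        simp at hlen ⊢; omega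
      have ihx := ih m t₁ ((0 : Fin 2) :: t₂) len
      rw [wprod_cons (1 : Fin 2), e1, hsh.2.2.2.1, hsh.2.2.2.2, hsh.2.2.2.2, hsh.2.2.2.1, ihx]
    · -- both b
      have e1 : (FreeAlgebra.ι CC (1 : Fin 2) : H) = bv := rfl
      have len : t₁.length + ((1 : Fin 2) :: t₂ : List (Fin 2)).length ≤ n := by
        simp at hlen ⊢; omega
      have ihx := ih m t₁ ((1 : Fin 2) :: t₂) len
      rw [wprod_cons (1 : Fin 2), e1, hsh.2.2.2.1, hsh.2.2.2.2, hsh.2.2.2.2, hsh.2.2.2.1, ihx]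

lemma shAssoc (m : ℕ) (x y : H) :
    sh (av * bv ^ m) (sh x y) = sh (sh (av * bv ^ m) x) y := by
  induction mem_wspan x using Submodule.span_induction with
  | mem x hx =>
    obtain ⟨l₁, rfl⟩ := hx
    induction mem_wspan y using Submodule.span_induction with
    | mem y hy =>
      obtain ⟨l₂, rfl⟩ := hy
      exact shAssoc_words hsh (l₁.length + l₂.length) m l₁ l₂ le_rfl
    | zero => simp
    | add y z _ _ h1 h2 => simp only [map_add, h1, h2]
    | smul c y _ h1 => simp only [map_smul, h1]
  | zero => simp
  | add x z _ _ h1 h2 =>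
    simp only [map_add, LinearMap.add_apply, h1, h2]
  | smul c x _ h1 =>
    simp only [map_smul, LinearMap.smul_apply, h1]

end Elt

end WordAux

open Finset in
lemma nest_swap {M : Type*} [AddCommMonoid M] (N : ℕ) (F : ℕ → ℕ → ℕ → M) :
    ∑ p ∈ antidiagonal N, ∑ q ∈ antidiagonal p.2, F p.1 q.1 q.2
      = ∑ p ∈ antidiagonal N, ∑ q ∈ antidiagonal p.2, F q.1 p.1 q.2 := by
  rw [Finset.sum_sigma', Finset.sum_sigma']
  refine Finset.sum_nbij' (fun x => ⟨(x.2.1, x.1.1 + x.2.2), (x.1.1, x.2.2)⟩)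
    (fun x => ⟨(x.2.1, x.1.1 + x.2.2), (x.1.1, x.2.2)⟩) ?_ ?_ ?_ ?_ ?_ <;>
    rintro ⟨⟨a, b⟩, ⟨c, d⟩⟩ hx <;>
    simp only [Finset.mem_sigma, Finset.mem_antidiagonal] at hx ⊢ <;>
    simp_all <;> omega

open Finset in
lemma nest_assoc {M : Type*} [AddCommMonoid M] (N : ℕ) (F : ℕ → ℕ → ℕ → M) :
    ∑ p ∈ antidiagonal N, ∑ q ∈ antidiagonal p.1, F q.1 q.2 p.2
      = ∑ p ∈ antidiagonal N, ∑ q ∈ antidiagonal p.2, F p.1 q.1 q.2 := by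
  rw [Finset.sum_sigma', Finset.sum_sigma']
  refine Finset.sum_nbij' (fun x => ⟨(x.2.1, x.2.2 + x.1.2), (x.2.2, x.1.2)⟩)
    (fun x => ⟨(x.1.1 + x.2.1, x.2.2), (x.1.1, x.2.1)⟩) ?_ ?_ ?_ ?_ ?_ <;>
    rintro ⟨⟨a, b⟩, ⟨c, d⟩⟩ hx <;>
    simp only [Finset.mem_sigma, Finset.mem_antidiagonal] at hx ⊢ <;>
    simp_all <;> omega

section SeriesAux

open Finset PowerSeries

lemma coeff_extMul (m : H →ₗ[CC] H →ₗ[CC] H) (f g : PowerSeries H) (N : ℕ) :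
    coeff (R := H) N (extMul m f g)
      = ∑ p ∈ antidiagonal N, m (coeff (R := H) p.1 f) (coeff (R := H) p.2 g) := by
  simp [extMul]

lemma extMul_add_left (m : H →ₗ[CC] H →ₗ[CC] H) (f g h : PowerSeries H) :
    extMul m (f + g) h = extMul m f h + extMul m g h := by
  ext N
  simp [coeff_extMul, Finset.sum_add_distrib]

lemma extMul_sub_right (m : H →ₗ[CC] H →ₗ[CC] H) (f g h : PowerSeries H) :
    extMul m f (g - h) = extMul m f g - extMul m f h := by
  ext N
  simp [coeff_extMul, Finset.sum_sub_distrib]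

lemma coeff_psiS_succ (n : ℕ) :
    coeff (R := H) (n+1) psiS
      = (qs ((-1 : ℚ) ^ n / (n+1 : ℚ)) * hb ^ n) • (av * bv ^ (n+1)) := by
  simp [psiS]

lemma coeff_psiS_zero : coeff (R := H) 0 psiS = 0 := by simp [psiS]

lemma coeff_lgS_succ (n : ℕ) :
    coeff (R := H) (n+1) lgS
      = (qs ((-1 : ℚ) ^ n / (n+1 : ℚ)) * hb ^ (n+1)) • (bv ^ (n+1)) := by
  simp [lgS]

lemma coeff_lgS_zero : coeff (R := H) 0 lgS = 0 := by simp [lgS]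

variable {sh : H →ₗ[CC] H →ₗ[CC] H} (hsh : IsShuffle sh)

include hsh

lemma sh_smul_left (c : CC) (x y : H) : sh (c • x) y = c • sh x y := by
  rw [LinearMap.map_smul₂]

lemma sh_smul_right (c : CC) (x y : H) : sh x (c • y) = c • sh x y :=
  map_smul (sh x) c y

lemma extMul_one_left (w : PowerSeries H) : extMul sh 1 w = w := by
  ext N
  rw [coeff_extMul, Finset.Nat.sum_antidiagonal_eq_sum_range_succ_mk]
  rw [Finset.sum_eq_single 0]
  · simp [hsh.1]
  · intro b _ hb0
    rcases b with _ | b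
    · omega
    · simp [PowerSeries.coeff_one]
  · simp

lemma DshOp_eq (w : PowerSeries H) :
    DshOp sh w = extMul sh psiS w - psiS * w := by
  ext N
  rw [map_sub, coeff_extMul, PowerSeries.coeff_mul,
    Finset.Nat.sum_antidiagonal_eq_sum_range_succ_mk,
    Finset.Nat.sum_antidiagonal_eq_sum_range_succ_mk, ← Finset.sum_sub_distrib]
  have hsplit : Finset.range (N+1) = insert 0 (Finset.Icc 1 N) := by
    ext x; simp; omega
  rw [hsplit, Finset.sum_insert (by simp)]
  rw [coeff_psiS_zero]
  simp only [map_zero, LinearMap.zero_apply, zero_mul, sub_zero, zero_add]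
  rw [DshOp, PowerSeries.coeff_mk]
  refine Finset.sum_congr rfl fun n hn => ?_
  obtain ⟨n, rfl⟩ : ∃ m, n = m + 1 := by
    refine ⟨n - 1, ?_⟩
    simp at hn; omega
  rw [dOp, PowerSeries.coeff_mk, coeff_psiS_succ]
  rw [sh_smul_left hsh, smul_mul_assoc, smul_sub]
  have hsc : qs (1 / (↑(n+1) : ℚ)) * (-hb) ^ (n + 1 - 1)
      = qs ((-1 : ℚ) ^ n / ((n : ℚ) + 1)) * hb ^ n := by
    have h1 : ((-1 : ℚ) ^ n / ((n : ℚ) + 1)) = (-1 : ℚ) ^ n * (1 / (↑(n+1) : ℚ)) := by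
      push_cast; ring
    rw [h1, Nat.add_sub_cancel, ← neg_one_mul hb, mul_pow]
    rw [qs, qs, map_mul, map_pow, map_neg, map_one]
    ring
  rw [hsc]

lemma lg_elt (n : ℕ) (x y : H) :
    sh (coeff (R := H) n lgS * x) y = coeff (R := H) n lgS * sh x y := by
  rcases n with _ | n
  · simp [coeff_lgS_zero]
  · rw [coeff_lgS_succ, smul_mul_assoc, sh_smul_left hsh, shb_left hsh, smul_mul_assoc]

lemma key_elt (m i : ℕ) (x : H) :
    sh (coeff (R := H) m psiS) (coeff (R := H) i psiS * x)
      = coeff (R := H) i psiS * sh (coeff (R := H) m psiS) x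
        + coeff (R := H) m psiS * (coeff (R := H) i psiS * x)
        + coeff (R := H) m psiS * (coeff (R := H) i lgS * x) := by
  rcases m with _ | m
  · simp [coeff_psiS_zero]
  rcases i with _ | i
  · simp [coeff_psiS_zero, coeff_lgS_zero]
  rw [coeff_psiS_succ, coeff_psiS_succ, coeff_lgS_succ]
  have core : sh (av * bv ^ (m+1)) (av * bv ^ (i+1) * x)
      = av * bv ^ (i+1) * sh (av * bv ^ (m+1)) x
        + av * bv ^ (m+1) * (av * bv ^ (i+1) * x)
        + hb • (av * bv ^ (m+1) * (bv ^ (i+1) * x)) := by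
    rw [mul_assoc av (bv ^ (i+1)) x, shL0 hsh (m+1) (bv ^ (i+1) * x),
      shb_right hsh]
    simp only [mul_add, mul_smul_comm, ← mul_assoc]
  have hpow : hb ^ (i+1) = hb ^ i * hb := by rw [pow_succ]
  simp only [hpow, smul_mul_assoc, map_smul, sh_smul_left hsh, LinearMap.smul_apply,
    mul_smul_comm, smul_add, smul_smul]
  rw [core]
  simp only [mul_add, mul_smul_comm, smul_add, smul_smul]
  module

lemma psi_elt_assoc (n : ℕ) (x y : H) :
    sh (coeff (R := H) n psiS) (sh x y) = sh (sh (coeff (R := H) n psiS) x) y := by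
  rcases n with _ | n
  · simp [coeff_psiS_zero]
  · rw [coeff_psiS_succ]
    simp only [sh_smul_left hsh, map_smul, LinearMap.smul_apply]
    rw [shAssoc hsh (n+1)]

lemma shAssoc_ser (u w : PowerSeries H) :
    extMul sh psiS (extMul sh u w) = extMul sh (extMul sh psiS u) w := by
  ext N
  rw [coeff_extMul, coeff_extMul]
  calc ∑ p ∈ antidiagonal N, sh (coeff (R := H) p.1 psiS) (coeff (R := H) p.2 (extMul sh u w))
      = ∑ p ∈ antidiagonal N, ∑ q ∈ antidiagonal p.2,
          sh (sh (coeff (R := H) p.1 psiS) (coeff (R := H) q.1 u)) (coeff (R := H) q.2 w) := by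
        refine Finset.sum_congr rfl fun p _ => ?_
        rw [coeff_extMul, map_sum]
        exact Finset.sum_congr rfl fun q _ => psi_elt_assoc hsh p.1 _ _
    _ = ∑ p ∈ antidiagonal N, ∑ q ∈ antidiagonal p.1,
          sh (sh (coeff (R := H) q.1 psiS) (coeff (R := H) q.2 u)) (coeff (R := H) p.2 w) := by
        rw [nest_assoc N (fun a b c => sh (sh (coeff (R := H) a psiS) (coeff (R := H) b u)) (coeff (R := H) c w))]
    _ = ∑ p ∈ antidiagonal N, sh (coeff (R := H) p.1 (extMul sh psiS u)) (coeff (R := H) p.2 w) := by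
        refine Finset.sum_congr rfl fun p _ => ?_
        rw [coeff_extMul, map_sum, LinearMap.sum_apply]

lemma ext_lg (u w : PowerSeries H) :
    extMul sh (lgS * u) w = lgS * extMul sh u w := by
  ext N
  rw [coeff_extMul, PowerSeries.coeff_mul]
  calc ∑ p ∈ antidiagonal N, sh (coeff (R := H) p.1 (lgS * u)) (coeff (R := H) p.2 w)
      = ∑ p ∈ antidiagonal N, ∑ q ∈ antidiagonal p.1,
          coeff (R := H) q.1 lgS * sh (coeff (R := H) q.2 u) (coeff (R := H) p.2 w) := by
        refine Finset.sum_congr rfl fun p _ => ?_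
        rw [PowerSeries.coeff_mul, map_sum, LinearMap.sum_apply]
        exact Finset.sum_congr rfl fun q _ => lg_elt hsh q.1 _ _
    _ = ∑ p ∈ antidiagonal N, ∑ q ∈ antidiagonal p.2,
          coeff (R := H) p.1 lgS * sh (coeff (R := H) q.1 u) (coeff (R := H) q.2 w) := by
        rw [nest_assoc N (fun a b c => coeff (R := H) a lgS * sh (coeff (R := H) b u) (coeff (R := H) c w))]
    _ = ∑ p ∈ antidiagonal N, coeff (R := H) p.1 lgS * coeff (R := H) p.2 (extMul sh u w) := by
        refine Finset.sum_congr rfl fun p _ => ?_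
        rw [coeff_extMul, Finset.mul_sum]

lemma key (v : PowerSeries H) :
    extMul sh psiS (psiS * v)
      = psiS * extMul sh psiS v + psiS * (psiS * v) + psiS * (lgS * v) := by
  ext N
  rw [coeff_extMul]
  calc ∑ p ∈ antidiagonal N, sh (coeff (R := H) p.1 psiS) (coeff (R := H) p.2 (psiS * v))
      = ∑ p ∈ antidiagonal N, ∑ q ∈ antidiagonal p.2,
          (coeff (R := H) q.1 psiS * sh (coeff (R := H) p.1 psiS) (coeff (R := H) q.2 v)
            + coeff (R := H) p.1 psiS * (coeff (R := H) q.1 psiS * coeff (R := H) q.2 v)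
            + coeff (R := H) p.1 psiS * (coeff (R := H) q.1 lgS * coeff (R := H) q.2 v)) := by
        refine Finset.sum_congr rfl fun p _ => ?_
        rw [PowerSeries.coeff_mul, map_sum]
        exact Finset.sum_congr rfl fun q _ => key_elt hsh p.1 q.1 _
    _ = (∑ p ∈ antidiagonal N, ∑ q ∈ antidiagonal p.2,
          coeff (R := H) q.1 psiS * sh (coeff (R := H) p.1 psiS) (coeff (R := H) q.2 v))
        + (∑ p ∈ antidiagonal N, ∑ q ∈ antidiagonal p.2,
          coeff (R := H) p.1 psiS * (coeff (R := H) q.1 psiS * coeff (R := H) q.2 v))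
        + (∑ p ∈ antidiagonal N, ∑ q ∈ antidiagonal p.2,
          coeff (R := H) p.1 psiS * (coeff (R := H) q.1 lgS * coeff (R := H) q.2 v)) := by
        simp [Finset.sum_add_distrib]
    _ = coeff (R := H) N (psiS * extMul sh psiS v + psiS * (psiS * v) + psiS * (lgS * v)) := by
        rw [nest_swap N (fun a b c => coeff (R := H) b psiS * sh (coeff (R := H) a psiS) (coeff (R := H) c v))]
        simp only [map_add, PowerSeries.coeff_mul, coeff_extMul, Finset.mul_sum]

end SeriesAux


/-- (i) `(D^⧢_X)^s(w) = (ψ(X)ρ_s(X)) ⧢_q w − ψ(X)·(ρ_s(X) ⧢_q w)`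
for all `s ≥ 1` and `w ∈ H[[X]]`; (ii) `ψ(X)ρ_s(X) = ψ(X)^{⧢_q s}` for all `s ≥ 1`. -/
theorem DshOp_iterate_eq (sh : H →ₗ[CC] H →ₗ[CC] H) (hsh : IsShuffle sh)
    (s : ℕ) (hs : 1 ≤ s) :
    (∀ w : PowerSeries H,
      (DshOp sh)^[s] w
        = extMul sh (psiS * rhoAux sh (s - 1)) w
            - psiS * extMul sh (rhoAux sh (s - 1)) w) ∧
    psiS * rhoAux sh (s - 1) = itpow sh psiS s := by
  obtain ⟨t, rfl⟩ : ∃ t, s = t + 1 := ⟨s - 1, by omega⟩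
  clear hs
  simp only [Nat.add_sub_cancel]
  induction t with
  | zero =>
    constructor
    · intro w
      have h0 : rhoAux sh 0 = 1 := rfl
      rw [Function.iterate_one, h0, mul_one, extMul_one_left hsh, DshOp_eq hsh]
    · have h0 : rhoAux sh 0 = 1 := rfl
      rw [h0, mul_one]
      rfl
  | succ t ih =>
    have hrho : rhoAux sh (t+1) = (psiS + lgS) * rhoAux sh t + extMul sh psiS (rhoAux sh t) :=
      rfl
    set r := rhoAux sh t with hr
    constructor
    · intro w
      rw [Function.iterate_succ_apply', ih.1 w, DshOp_eq hsh, extMul_sub_right,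
        shAssoc_ser hsh, key hsh, key hsh, shAssoc_ser hsh]
      rw [hrho]
      have expand1 : psiS * ((psiS + lgS) * r + extMul sh psiS r)
          = (psiS * extMul sh psiS r + psiS * (psiS * r)) + psiS * (lgS * r) := by
        noncomm_ring
      rw [expand1, extMul_add_left, extMul_add_left]
      have expand2 : (psiS + lgS) * r + extMul sh psiS r
          = (psiS * r + lgS * r) + extMul sh psiS r := by noncomm_ring
      rw [expand2, extMul_add_left, extMul_add_left, ext_lg hsh, mul_sub]
      noncomm_ring
    · rw [hrho]
      have h2 : itpow sh psiS (t + 1 + 1) = extMul sh psiS (itpow sh psiS (t+1)) := rfl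
      rw [h2, ← ih.2, key hsh]
      noncomm_ring

end
end

section
/- Let n ≥ 1 and let ζ_n ∈ ℂ be a primitive n-th root of unity. Then for every integer r with 0 ≤ r ≤ n−1, Σ_{n>m_1>⋯>m_r≥1} Π_{j=1}^r (ζ_n^{m_j}/[m_j]) = ((−1)^r/n)·binom(n, r+1)·(1−ζ_n)^r, where [m] = (1−ζ_n^m)/(1−ζ_n). Equivalently, Π_{m=1}^{n−1} (1 + (ζ_n^m/[m])T) = (1 − (1 − (1−ζ_n)T)^n) / (n(1−ζ_n)T) as polynomials in T. -/
noncomputable section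

open Polynomial Finset in
lemma aux_Icc_image (n' : ℕ) : Finset.Icc 1 n' = (Finset.range n').image (· + 1) := by
  ext m
  simp only [Finset.mem_Icc, Finset.mem_image, Finset.mem_range]
  constructor
  · intro h; exact ⟨m - 1, by omega, by omega⟩
  · rintro ⟨k, hk, rfl⟩; omega

lemma aux_prod_Icc_range {M : Type*} [CommMonoid M] (n' : ℕ) (g : ℕ → M) :
    ∏ m ∈ Finset.Icc 1 n', g m = ∏ k ∈ Finset.range n', g (k + 1) := by
  rw [aux_Icc_image, Finset.prod_image (fun a _ b _ h => by omega)]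

open Polynomial Finset in
lemma aux_coeff_prod_one_add {ι : Type*} [DecidableEq ι] (s : Finset ι) (b : ι → ℂ) :
    ∀ k : ℕ, (∏ i ∈ s, (1 + C (b i) * X)).coeff k = ∑ t ∈ s.powersetCard k, ∏ i ∈ t, b i := by
  induction s using Finset.induction_on with
  | empty =>
    intro k
    cases k with
    | zero => simp
    | succ k => rw [Finset.powersetCard_eq_empty.mpr (by simp)]; simp [coeff_one]
  | @insert a s ha ih =>
    intro k
    rw [Finset.prod_insert ha]
    have hexp : (1 + C (b a) * X) * ∏ i ∈ s, (1 + C (b i) * X)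
        = (∏ i ∈ s, (1 + C (b i) * X)) + C (b a) * (X * ∏ i ∈ s, (1 + C (b i) * X)) := by
      ring
    rw [hexp]
    cases k with
    | zero =>
      simp [ih 0, mul_coeff_zero]
    | succ k =>
      rw [coeff_add, coeff_C_mul, coeff_X_mul, ih (k+1), ih k,
        Finset.powersetCard_succ_insert ha]
      have hdisj : Disjoint (s.powersetCard (k+1)) ((s.powersetCard k).image (insert a)) := by
        rw [Finset.disjoint_left]
        intro t ht ht'
        obtain ⟨u, hu, rfl⟩ := Finset.mem_image.mp ht'
        exact ha ((Finset.mem_powersetCard.mp ht).1 (Finset.mem_insert_self a u))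
      rw [Finset.sum_union hdisj]
      congr 1
      rw [Finset.sum_image (by
        intro t ht t' ht' hins
        have hat : a ∉ t := fun h => ha ((Finset.mem_powersetCard.mp ht).1 h)
        have hat' : a ∉ t' := fun h => ha ((Finset.mem_powersetCard.mp ht').1 h)
        rw [← Finset.erase_insert hat, ← Finset.erase_insert hat', hins])]
      rw [Finset.mul_sum]
      refine Finset.sum_congr rfl fun t ht => ?_
      rw [Finset.prod_insert (fun h => ha ((Finset.mem_powersetCard.mp ht).1 h))]

open Polynomial Finset in
lemma aux_prod_one_sub_zeta (n : ℕ) (hn : 1 ≤ n) (ζ : ℂ) (hζ : IsPrimitiveRoot ζ n) :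
    ∏ i ∈ Finset.range n, (1 - C (ζ ^ i) * X) = 1 - X ^ n := by
  apply Polynomial.funext
  intro x
  simp only [eval_prod, eval_sub, eval_one, eval_mul, eval_C, eval_X, eval_pow]
  by_cases hx : x = 0
  · subst hx; simp [hn, zero_pow (by omega : n ≠ 0)]
  · have h1 : (x⁻¹) ^ n - 1 = ∏ i ∈ Finset.range n, (x⁻¹ - ζ ^ i) := by
      have h0 := X_pow_sub_C_eq_prod hζ (by omega : 0 < n) (one_pow n)
      have h2 := congrArg (eval x⁻¹) h0
      simpa [eval_prod, inv_pow] using h2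
    calc ∏ i ∈ Finset.range n, (1 - ζ ^ i * x)
        = ∏ i ∈ Finset.range n, (x * (x⁻¹ - ζ ^ i)) := by
          refine Finset.prod_congr rfl fun i _ => ?_
          field_simp
      _ = x ^ n * ∏ i ∈ Finset.range n, (x⁻¹ - ζ ^ i) := by
          rw [Finset.prod_mul_distrib, Finset.prod_const, Finset.card_range]
      _ = x ^ n * ((x⁻¹) ^ n - 1) := by rw [← h1]
      _ = 1 - x ^ n := by
          rw [mul_sub, ← mul_pow, mul_inv_cancel₀ hx, one_pow, mul_one]

open Polynomial Finset in
lemma aux_prod_eq_n (n : ℕ) (hn : 1 ≤ n) (ζ : ℂ) (hζ : IsPrimitiveRoot ζ n) :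
    ∏ m ∈ Finset.Icc 1 (n-1), (1 - ζ ^ m) = (n : ℂ) := by
  obtain ⟨n', rfl⟩ : ∃ n', n = n' + 1 := ⟨n - 1, by omega⟩
  have h := hζ.prod_one_sub_pow_eq_order
  simp only [Nat.add_sub_cancel]
  rw [aux_prod_Icc_range, h]
  push_cast
  ring

open Polynomial Finset in
lemma aux_coeff_one_sub_pow (w : ℂ) (n k : ℕ) (h : k ≤ n) :
    ((1 - C w * X) ^ n).coeff k = (n.choose k : ℂ) * (-w) ^ k := by
  have h1 : (1 : ℂ[X]) - C w * X = C (-w) * X + 1 := by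
    rw [map_neg]; ring
  rw [h1, add_pow]
  have h2 : ∀ j ∈ Finset.range (n+1),
      (C (-w) * X) ^ j * 1 ^ (n - j) * (n.choose j : ℂ[X])
        = C ((-w) ^ j * (n.choose j : ℂ)) * X ^ j := by
    intro j _
    rw [one_pow, mul_one, mul_pow, ← C_pow, C_mul]
    rw [Polynomial.C_eq_natCast]
    ring
  rw [Finset.sum_congr rfl h2, finset_sum_coeff]
  rw [Finset.sum_eq_single k]
  · rw [coeff_C_mul, coeff_X_pow, if_pos rfl, mul_one, mul_comm]
  · intro j _ hj
    rw [coeff_C_mul, coeff_X_pow, if_neg (fun hh => hj hh.symm), mul_zero]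
  · intro hk
    exact absurd (Finset.mem_range.mpr (by omega)) hk

open Classical in
/-- For a primitive `n`-th root of unity `ζ_n` (`n ≥ 1`) and
`0 ≤ r ≤ n−1`:
`Σ_{n>m_1>⋯>m_r≥1} Π_j ζ_n^{m_j}/[m_j] = ((−1)^r/n)·binom(n, r+1)·(1−ζ_n)^r`;
equivalently, `n(1−ζ_n)T·Π_{m=1}^{n−1}(1 + (ζ_n^m/[m])T) = 1 − (1 − (1−ζ_n)T)^n`
as polynomials in `T`. -/
theorem zn_ones_generating_function (n : ℕ) (hn : 1 ≤ n)
    (ζ : ℂ) (hζ : IsPrimitiveRoot ζ n) :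
    (∀ r : ℕ, r ≤ n - 1 →
      (∑ f : Fin r → Fin n,
          if (StrictAnti fun i => ((f i : ℕ))) ∧ (∀ i, 0 < ((f i : ℕ))) then
            ∏ i : Fin r, ζ ^ ((f i : ℕ)) / qint ζ ((f i : ℕ))
          else 0)
        = (-1 : ℂ) ^ r / n * (n.choose (r + 1)) * (1 - ζ) ^ r) ∧
    (Polynomial.C ((n : ℂ) * (1 - ζ)) * Polynomial.X) *
        ∏ m ∈ Finset.Icc 1 (n - 1),
          (1 + Polynomial.C (ζ ^ m / qint ζ m) * Polynomial.X)
      = 1 - (1 - Polynomial.C (1 - ζ) * Polynomial.X) ^ n := by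
  open Polynomial Finset in
  have hpoly : (Polynomial.C ((n : ℂ) * (1 - ζ)) * Polynomial.X) *
        ∏ m ∈ Finset.Icc 1 (n - 1),
          (1 + Polynomial.C (ζ ^ m / qint ζ m) * Polynomial.X)
      = 1 - (1 - Polynomial.C (1 - ζ) * Polynomial.X) ^ n := by
    set u : ℂ[X] := 1 - C (1 - ζ) * X with hu
    have hfac : ∀ m ∈ Finset.Icc 1 (n-1),
        C (1 - ζ ^ m) * (1 + C (ζ ^ m / qint ζ m) * X) = 1 - C (ζ ^ m) * u := by
      intro m hm
      rw [Finset.mem_Icc] at hm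
      have hn2 : 2 ≤ n := by omega
      have hζ1 : ζ ≠ 1 := hζ.ne_one hn2
      have hζm : ζ ^ m ≠ 1 := hζ.pow_ne_one_of_pos_of_lt (by omega) (by omega)
      have h1 : (1 - ζ ^ m) * (ζ ^ m / qint ζ m) = ζ ^ m * (1 - ζ) := by
        rw [qint]
        have hz1 : (1 : ℂ) - ζ ≠ 0 := sub_ne_zero.mpr (Ne.symm hζ1)
        have hzm : (1 : ℂ) - ζ ^ m ≠ 0 := sub_ne_zero.mpr (Ne.symm hζm)
        field_simp
      have h2 : (C (1 - ζ ^ m) : ℂ[X]) = 1 - C (ζ ^ m) := by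
        rw [map_sub, map_one]
      have h3 : (C ((1 - ζ ^ m) * (ζ ^ m / qint ζ m)) : ℂ[X]) = C (ζ ^ m) * C (1 - ζ) := by
        rw [h1, map_mul]
      rw [hu, mul_add, mul_one, ← mul_assoc, ← C_mul, h3, h2]
      ring
    have hprod : C ((n : ℂ)) * ∏ m ∈ Finset.Icc 1 (n-1), (1 + C (ζ ^ m / qint ζ m) * X)
        = ∏ m ∈ Finset.Icc 1 (n-1), (1 - C (ζ ^ m) * u) := by
      rw [← Finset.prod_congr rfl hfac, Finset.prod_mul_distrib, ← map_prod,
        aux_prod_eq_n n hn ζ hζ]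
    have hrange : ∏ m ∈ Finset.range n, (1 - C (ζ ^ m) * u) = 1 - u ^ n := by
      have h := congrArg (Polynomial.aeval u) (aux_prod_one_sub_zeta n hn ζ hζ)
      simpa [map_prod, Polynomial.algebraMap_eq] using h
    have hsplit : ∏ m ∈ Finset.range n, (1 - C (ζ ^ m) * u)
        = (∏ m ∈ Finset.Icc 1 (n-1), (1 - C (ζ ^ m) * u)) * (1 - u) := by
      obtain ⟨n', rfl⟩ : ∃ n', n = n' + 1 := ⟨n - 1, by omega⟩
      rw [Finset.prod_range_succ']
      simp only [Nat.add_sub_cancel]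
      rw [aux_prod_Icc_range n' (fun m => 1 - C (ζ ^ m) * u)]
      simp
    have h1u : (1 : ℂ[X]) - u = C (1 - ζ) * X := by rw [hu]; ring
    calc (C ((n : ℂ) * (1 - ζ)) * X) * ∏ m ∈ Finset.Icc 1 (n-1), (1 + C (ζ ^ m / qint ζ m) * X)
        = (1 - u) * (C ((n : ℂ)) * ∏ m ∈ Finset.Icc 1 (n-1), (1 + C (ζ ^ m / qint ζ m) * X)) := by
          rw [h1u, map_mul]; ring
      _ = (1 - u) * ∏ m ∈ Finset.Icc 1 (n-1), (1 - C (ζ ^ m) * u) := by rw [hprod]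
      _ = ∏ m ∈ Finset.range n, (1 - C (ζ ^ m) * u) := by rw [hsplit]; ring
      _ = 1 - u ^ n := hrange
  refine ⟨?_, hpoly⟩
  intro r hr
  rcases eq_or_lt_of_le hn with h1 | h2
  · -- n = 1
    open Finset in
    have hn1 : n = 1 := h1.symm
    subst hn1
    have hr0 : r = 0 := by omega
    subst hr0
    have hcond : ∀ f : Fin 0 → Fin 1,
        (StrictAnti fun i => ((f i : ℕ))) ∧ (∀ i, 0 < ((f i : ℕ))) :=
      fun f => ⟨fun a => a.elim0, fun i => i.elim0⟩
    simp only [pow_zero, Nat.choose_self]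
    rw [Finset.sum_congr rfl (fun f _ => if_pos (hcond f))]
    simp
  · -- n ≥ 2
    open Polynomial Finset in
    have hn2 : 2 ≤ n := h2
    have hζ1 : ζ ≠ 1 := hζ.ne_one hn2
    have hz1 : (1 : ℂ) - ζ ≠ 0 := sub_ne_zero.mpr (Ne.symm hζ1)
    have hn0 : (n : ℂ) ≠ 0 := Nat.cast_ne_zero.mpr (by omega)
    have hs1 : (∑ f : Fin r → Fin n,
            if (StrictAnti fun i => ((f i : ℕ))) ∧ (∀ i, 0 < ((f i : ℕ))) then
              ∏ i : Fin r, ζ ^ ((f i : ℕ)) / qint ζ ((f i : ℕ))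
            else 0)
        = ∑ t ∈ (Finset.Icc 1 (n-1)).powersetCard r, ∏ m ∈ t, ζ ^ m / qint ζ m := by
      rw [← Finset.sum_filter]
      refine Finset.sum_bij'
        (i := fun f _ => Finset.image (fun i => ((f i : ℕ))) Finset.univ)
        (j := fun t ht i => (⟨t.orderEmbOfFin (Finset.mem_powersetCard.mp ht).2 i.rev, by
          have h1 := t.orderEmbOfFin_mem (Finset.mem_powersetCard.mp ht).2 i.rev
          have h2 := (Finset.mem_powersetCard.mp ht).1 h1
          rw [Finset.mem_Icc] at h2
          omega⟩ : Fin n))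
        ?_ ?_ ?_ ?_ ?_
      · intro f hf
        rw [Finset.mem_filter] at hf
        obtain ⟨-, hanti, hpos⟩ := hf
        rw [Finset.mem_powersetCard]
        constructor
        · intro x hx
          obtain ⟨i, -, rfl⟩ := Finset.mem_image.mp hx
          rw [Finset.mem_Icc]
          have := (f i).isLt
          have := hpos i
          omega
        · rw [Finset.card_image_of_injective _ hanti.injective, Finset.card_univ,
            Fintype.card_fin]
      · intro t ht
        rw [Finset.mem_filter]
        refine ⟨Finset.mem_univ _, fun i j hij => ?_, fun i => ?_⟩
        · exact (t.orderEmbOfFin (Finset.mem_powersetCard.mp ht).2).strictMono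
            (Fin.rev_lt_rev.mpr hij)
        · have h1 := t.orderEmbOfFin_mem (Finset.mem_powersetCard.mp ht).2 i.rev
          have h2 := (Finset.mem_powersetCard.mp ht).1 h1
          rw [Finset.mem_Icc] at h2
          exact h2.1
      · intro f hf
        rw [Finset.mem_filter] at hf
        obtain ⟨-, hanti, hpos⟩ := hf
        have hcard : (Finset.image (fun i => ((f i : ℕ))) Finset.univ).card = r := by
          rw [Finset.card_image_of_injective _ hanti.injective, Finset.card_univ,
            Fintype.card_fin]
        have hkey : (fun k : Fin r => ((f k.rev : ℕ)))
            = (Finset.image (fun i => ((f i : ℕ))) Finset.univ).orderEmbOfFin hcard := by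
          apply Finset.orderEmbOfFin_unique
          · intro k; exact Finset.mem_image.mpr ⟨k.rev, Finset.mem_univ _, rfl⟩
          · intro k l hkl
            exact hanti (Fin.rev_lt_rev.mpr hkl)
        funext i
        apply Fin.ext
        show ((Finset.image (fun i => ((f i : ℕ))) Finset.univ).orderEmbOfFin _ i.rev : ℕ)
          = (f i : ℕ)
        rw [← congrFun hkey i.rev, Fin.rev_rev]
      · intro t ht
        have hcard := (Finset.mem_powersetCard.mp ht).2
        apply Finset.Subset.antisymm
        · intro x hx
          obtain ⟨i, -, rfl⟩ := Finset.mem_image.mp hx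
          exact t.orderEmbOfFin_mem hcard i.rev
        · intro x hx
          have hmem : x ∈ Set.range (t.orderEmbOfFin hcard) := by
            rw [Finset.range_orderEmbOfFin]; exact hx
          obtain ⟨k, hk⟩ := hmem
          refine Finset.mem_image.mpr ⟨k.rev, Finset.mem_univ _, ?_⟩
          show (t.orderEmbOfFin hcard k.rev.rev : ℕ) = x
          rw [Fin.rev_rev]
          exact hk
      · intro f hf
        rw [Finset.mem_filter] at hf
        obtain ⟨-, hanti, hpos⟩ := hf
        rw [Finset.prod_image (fun i _ j _ h => hanti.injective h)]
    rw [hs1, ← aux_coeff_prod_one_add (Finset.Icc 1 (n-1)) (fun m => ζ ^ m / qint ζ m) r]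
    have hco := congrArg (fun p : ℂ[X] => p.coeff (r+1)) hpoly
    simp only [mul_assoc, coeff_C_mul, coeff_X_mul, coeff_sub] at hco
    rw [aux_coeff_one_sub_pow (1 - ζ) n (r+1) (by omega), coeff_one, if_neg (by omega)] at hco
    apply mul_left_cancel₀ (mul_ne_zero hn0 hz1)
    rw [mul_assoc, hco]
    rw [neg_pow, pow_succ (1 - ζ), pow_succ (-1 : ℂ)]
    field_simp
    ring

end
end
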